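/- arXiv:1205.5188 — 5 statements merged into one kernel-verified Lean document; each statement's English description precedes it below -/
import Mathlib

section
/- Let Λ = Λ₁ ∪ … ∪ Λ_N ⊂ ℤ² satisfy conditions (1_Λ)–(5_Λ); for n ∈ Λ_j with 1 ≤ j < N denote by n_spouse ∈ Λ_j and n_child₁, n_child₂ ∈ Λ_{j+1} the unique spouse and children of n given by condition (2_Λ), and for n ∈ Λ_j with 1 < j ≤ N denote by n_sibling ∈ Λ_j and n_parent₁, n_parent₂ ∈ Λ_{j−1} the unique sibling and parents given by condition (3_Λ). Consider the finite ODE system, for n ∈ Λ, −i (d/dt) β_n = −β_n |β_n|² + 2 β_{n_child₁} β_{n_child₂} conj(β_{n_spouse}) + 2 β_{n_parent₁} β_{n_parent₂} conj(β_{n_sibling}), where the children terms are absent for n ∈ Λ_N and the parent terms are absent for n ∈ Λ₁. If β is a solution on an interval I containing 0 with β_n(0) = β_{n′}(0) whenever n and n′ belong to the same generation, then β_n(t) = β_{n′}(t) for all t ∈ I whenever n and n′ belong to the same generation; moreover, setting b_j(t) equal to the common value of β_n(t) for n ∈ Λ_j, the function b = (b₁,…,b_N) is a solution of the toy model. -/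
/-! STATEMENT 7: the invariant subspace where all members of a generation coincide, and the reduction to the toy model. -/

noncomputable section

open Complex

abbrev Z2 := ℤ × ℤ

/-- squared Euclidean norm of a frequency `n ∈ ℤ²` (as an integer) -/
def sqz (n : Z2) : ℤ := n.1 ^ 2 + n.2 ^ 2

/-- `(n₁, n₂, n₃) ∈ A(n)`: the resonant, non-trivial convolution constraints -/
def memA (n₁ n₂ n₃ n : Z2) : Prop :=
  n₁ - n₂ + n₃ = n ∧ sqz n₁ - sqz n₂ + sqz n₃ = sqz n ∧ n₁ ≠ n ∧ n₃ ≠ n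

/-- a rectangle is a quadruple `(n₁, n₂, n₃, n₄)` with `(n₁, n₂, n₃) ∈ A(n₄)` -/
def IsRect (n₁ n₂ n₃ n₄ : Z2) : Prop := memA n₁ n₂ n₃ n₄

/-- the union `Λ = Λ₁ ∪ ⋯ ∪ Λ_N` of the generations -/
def LamUnion (N : ℕ) (Lam : ℕ → Finset Z2) : Finset Z2 :=
  (Finset.Icc 1 N).biUnion Lam

/-- the generations are pairwise disjoint -/
def LamDisjoint (N : ℕ) (Lam : ℕ → Finset Z2) : Prop :=
  ∀ i ∈ Finset.Icc 1 N, ∀ j ∈ Finset.Icc 1 N, i ≠ j → Disjoint (Lam i) (Lam j)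

/-- a nuclear family: a rectangle whose parents `n₁, n₃` lie in some generation `Λ_j`
and whose children `n₂, n₄` lie in the next generation `Λ_{j+1}` -/
def NuclearFamily (N : ℕ) (Lam : ℕ → Finset Z2) (n₁ n₂ n₃ n₄ : Z2) : Prop :=
  IsRect n₁ n₂ n₃ n₄ ∧
    ∃ j : ℕ, 1 ≤ j ∧ j < N ∧ n₁ ∈ Lam j ∧ n₃ ∈ Lam j ∧
      n₂ ∈ Lam (j + 1) ∧ n₄ ∈ Lam (j + 1)

/-- condition `1_Λ` (closure) -/
def Cond1 (N : ℕ) (Lam : ℕ → Finset Z2) : Prop :=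
  ∀ n₁ n₂ n₃ n : Z2, n₁ ∈ LamUnion N Lam → n₂ ∈ LamUnion N Lam →
    n₃ ∈ LamUnion N Lam → memA n₁ n₂ n₃ n → n ∈ LamUnion N Lam

/-- condition `2_Λ` (existence and uniqueness of spouse and children):
every `n₁ ∈ Λ_j`, `1 ≤ j < N`, is a parent of exactly one nuclear family up to
trivial permutations -/
def Cond2 (N : ℕ) (Lam : ℕ → Finset Z2) : Prop :=
  ∀ j : ℕ, 1 ≤ j → j < N → ∀ n₁ ∈ Lam j,
    ∃ n₂ n₃ n₄ : Z2, NuclearFamily N Lam n₁ n₂ n₃ n₄ ∧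
      ∀ m₂ m₃ m₄ : Z2, NuclearFamily N Lam n₁ m₂ m₃ m₄ →
        m₃ = n₃ ∧ ((m₂ = n₂ ∧ m₄ = n₄) ∨ (m₂ = n₄ ∧ m₄ = n₂))

/-- condition `3_Λ` (existence and uniqueness of sibling and parents):
every `n₂ ∈ Λ_{j+1}`, `1 ≤ j < N`, is a child of exactly one nuclear family up to
trivial permutations -/
def Cond3 (N : ℕ) (Lam : ℕ → Finset Z2) : Prop :=
  ∀ j : ℕ, 1 ≤ j → j < N → ∀ n₂ ∈ Lam (j + 1),
    ∃ n₁ n₃ n₄ : Z2, NuclearFamily N Lam n₁ n₂ n₃ n₄ ∧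
      ∀ m₁ m₃ m₄ : Z2, NuclearFamily N Lam m₁ n₂ m₃ m₄ →
        m₄ = n₄ ∧ ((m₁ = n₁ ∧ m₃ = n₃) ∨ (m₁ = n₃ ∧ m₃ = n₁))

/-- condition `4_Λ` (nondegeneracy): the sibling of a frequency is never its spouse -/
def Cond4 (N : ℕ) (Lam : ℕ → Finset Z2) : Prop :=
  ∀ n n₂ n₃ n₄ m₁ m₃ m₄ : Z2,
    NuclearFamily N Lam n n₂ n₃ n₄ → NuclearFamily N Lam m₁ n m₃ m₄ → m₄ ≠ n₃

/-- condition `5_Λ` (faithfulness): apart from the nuclear families, `Λ` contains no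
other rectangle -/
def Cond5 (N : ℕ) (Lam : ℕ → Finset Z2) : Prop :=
  ∀ n₁ n₂ n₃ n₄ : Z2, n₁ ∈ LamUnion N Lam → n₂ ∈ LamUnion N Lam →
    n₃ ∈ LamUnion N Lam → n₄ ∈ LamUnion N Lam → IsRect n₁ n₂ n₃ n₄ →
      NuclearFamily N Lam n₁ n₂ n₃ n₄ ∨ NuclearFamily N Lam n₂ n₁ n₄ n₃

/-- condition `6_Λ` (no spreading): every `n ∉ Λ` is a vertex of at most two
rectangles having exactly two vertices in `Λ` and two vertices out of `Λ` -/
def Cond6 (N : ℕ) (Lam : ℕ → Finset Z2) : Prop :=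
  ∀ n : Z2, n ∉ LamUnion N Lam →
    ∃ V₁ V₂ : Finset Z2, ∀ n₁ n₂ n₃ n₄ : Z2, IsRect n₁ n₂ n₃ n₄ →
      (n = n₁ ∨ n = n₂ ∨ n = n₃ ∨ n = n₄) →
      (({n₁, n₂, n₃, n₄} : Finset Z2).filter (· ∈ LamUnion N Lam)).card = 2 →
      ({n₁, n₂, n₃, n₄} : Finset Z2) = V₁ ∨ ({n₁, n₂, n₃, n₄} : Finset Z2) = V₂

/-- `Λ = Λ₁ ∪ ⋯ ∪ Λ_N` consists of pairwise disjoint generations and satisfies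
conditions `1_Λ`–`6_Λ` -/
def GoodLambda (N : ℕ) (Lam : ℕ → Finset Z2) : Prop :=
  LamDisjoint N Lam ∧ Cond1 N Lam ∧ Cond2 N Lam ∧ Cond3 N Lam ∧
    Cond4 N Lam ∧ Cond5 N Lam ∧ Cond6 N Lam


/-- right-hand side of the toy model ODE for the `j`-th mode (with the convention
`b 0 = b (N+1) = 0` built into the support condition of `IsToySolution`):
`ḃ_j = -i b_j² conj(b_j) + 2i conj(b_j) (b_{j-1}² + b_{j+1}²)`. -/
def toyRHS (b : ℕ → ℂ) (j : ℕ) : ℂ :=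
  -Complex.I * (b j) ^ 2 * (starRingEnd ℂ) (b j)
    + 2 * Complex.I * (starRingEnd ℂ) (b j) * ((b (j - 1)) ^ 2 + (b (j + 1)) ^ 2)

/-- `b` is a solution of the toy model with `N` modes on the time set `I`:
the modes are indexed by `j = 1, …, N`, all other indices carry the value `0`. -/
def IsToySolution (N : ℕ) (I : Set ℝ) (b : ℝ → ℕ → ℂ) : Prop :=
  (∀ t : ℝ, ∀ j : ℕ, j = 0 ∨ N < j → b t j = 0) ∧
  ∀ t ∈ I, ∀ j : ℕ, 1 ≤ j → j ≤ N →
    HasDerivAt (fun s => b s j) (toyRHS (b t) j) t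


/-! Auxiliary lemmas for the Grönwall-type uniqueness argument. -/

private lemma gron_zero {E : Type*} [NormedAddCommGroup E] [NormedSpace ℝ E]
    (u F : ℝ → E) (K T : ℝ) (hT : 0 ≤ T)
    (hd : ∀ s ∈ Set.Icc 0 T, HasDerivAt u (F s) s)
    (hb : ∀ s ∈ Set.Icc 0 T, ‖F s‖ ≤ K * ‖u s‖)
    (h0 : u 0 = 0) : u T = 0 := by
  have hcont : ContinuousOn u (Set.Icc 0 T) := fun s hs =>
    (hd s hs).continuousAt.continuousWithinAt
  have hg := norm_le_gronwallBound_of_norm_deriv_right_le (δ := 0) (ε := 0) (K := K) hcont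
    (fun s hs => (hd s (Set.mem_Icc_of_Ico hs)).hasDerivWithinAt)
    (by simp [h0]) (fun s hs => by simpa using hb s (Set.mem_Icc_of_Ico hs))
  have h2 := hg T (Set.right_mem_Icc.2 hT)
  rw [gronwallBound_ε0_δ0] at h2
  exact norm_le_zero_iff.1 h2

private lemma gron_zero' {E : Type*} [NormedAddCommGroup E] [NormedSpace ℝ E]
    (u F : ℝ → E) (K T : ℝ) (hT : T ≤ 0)
    (hd : ∀ s ∈ Set.Icc T 0, HasDerivAt u (F s) s)
    (hb : ∀ s ∈ Set.Icc T 0, ‖F s‖ ≤ K * ‖u s‖)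
    (h0 : u 0 = 0) : u T = 0 := by
  have key := gron_zero (fun s => u (-s)) (fun s => -F (-s)) K (-T) (by linarith)
    (fun s hs => by
      have hms : -s ∈ Set.Icc T 0 := by
        simp only [Set.mem_Icc] at hs ⊢; constructor <;> linarith [hs.1, hs.2]
      have h1 : HasDerivAt u (F (-s)) (-s) := hd (-s) hms
      have h2 := h1.scomp s (hasDerivAt_neg s)
      simpa [Function.comp_def] using h2)
    (fun s hs => by
      have hms : -s ∈ Set.Icc T 0 := by
        simp only [Set.mem_Icc] at hs ⊢; constructor <;> linarith [hs.1, hs.2]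
      simpa using hb (-s) hms)
    (by simpa using h0)
  simpa using key

private lemma tri_est {a b c a' b' c' : ℂ} {M d : ℝ}
    (ha : ‖a‖ ≤ M) (hb : ‖b‖ ≤ M) (hc : ‖c‖ ≤ M)
    (ha' : ‖a'‖ ≤ M) (hb' : ‖b'‖ ≤ M)
    (hda : ‖a - a'‖ ≤ d) (hdb : ‖b - b'‖ ≤ d) (hdc : ‖c - c'‖ ≤ d) :
    ‖a * b * c - a' * b' * c'‖ ≤ 3 * M ^ 2 * d := by
  have hM : 0 ≤ M := le_trans (norm_nonneg a) ha
  have hd0 : 0 ≤ d := le_trans (norm_nonneg _) hda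
  have h : a * b * c - a' * b' * c'
      = (a - a') * (b * c) + a' * ((b - b') * c) + (a' * b') * (c - c') := by ring
  rw [h]
  have e1 : ‖(a - a') * (b * c)‖ ≤ d * (M * M) := by
    rw [norm_mul, norm_mul]
    exact mul_le_mul hda (mul_le_mul hb hc (norm_nonneg _) hM) (by positivity) hd0
  have e2 : ‖a' * ((b - b') * c)‖ ≤ M * (d * M) := by
    rw [norm_mul, norm_mul]
    exact mul_le_mul ha' (mul_le_mul hdb hc (norm_nonneg _) hd0) (by positivity) hM
  have e3 : ‖(a' * b') * (c - c')‖ ≤ M * M * d := by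
    rw [norm_mul, norm_mul]
    exact mul_le_mul (mul_le_mul ha' hb' (norm_nonneg _) hM) hdc (norm_nonneg _) (by positivity)
  calc ‖(a - a') * (b * c) + a' * ((b - b') * c) + (a' * b') * (c - c')‖
      ≤ ‖(a - a') * (b * c)‖ + ‖a' * ((b - b') * c)‖ + ‖(a' * b') * (c - c')‖ :=
        norm_add₃_le
    _ ≤ d * (M * M) + M * (d * M) + M * M * d := by linarith
    _ = 3 * M ^ 2 * d := by ring

private lemma quad_est {a b c a' b' c' : ℂ} {M d : ℝ}
    (ha : ‖a‖ ≤ M) (hb : ‖b‖ ≤ M) (hc : ‖c‖ ≤ M) (ha' : ‖a'‖ ≤ M) (hb' : ‖b'‖ ≤ M)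
    (hda : ‖a - a'‖ ≤ d) (hdb : ‖b - b'‖ ≤ d) (hdc : ‖c - c'‖ ≤ d) :
    ‖2 * a * b * (starRingEnd ℂ) c - 2 * a' * b' * (starRingEnd ℂ) c'‖ ≤ 6 * M ^ 2 * d := by
  have h : 2 * a * b * (starRingEnd ℂ) c - 2 * a' * b' * (starRingEnd ℂ) c'
      = 2 * (a * b * (starRingEnd ℂ) c - a' * b' * (starRingEnd ℂ) c') := by ring
  have hcc : ‖(starRingEnd ℂ) c‖ ≤ M := by rwa [RCLike.norm_conj]
  have hdcc : ‖(starRingEnd ℂ) c - (starRingEnd ℂ) c'‖ ≤ d := by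
    rw [← map_sub, RCLike.norm_conj]; exact hdc
  have hle := tri_est ha hb hcc ha' hb' hda hdb hdcc
  rw [h, norm_mul]
  have h2 : ‖(2 : ℂ)‖ = 2 := by norm_num
  rw [h2]
  linarith

private lemma norm_sub_add₃ (a b c a' b' c' : ℂ) :
    ‖a + b + c - (a' + b' + c')‖ ≤ ‖a - a'‖ + ‖b - b'‖ + ‖c - c'‖ := by
  have h : a + b + c - (a' + b' + c') = (a - a') + (b - b') + (c - c') := by ring
  rw [h]; exact norm_add₃_le

theorem stmt7 (N : ℕ) (Lam : ℕ → Finset Z2)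
    (hdisj : LamDisjoint N Lam) (h1 : Cond1 N Lam) (h2 : Cond2 N Lam)
    (h3 : Cond3 N Lam) (h4 : Cond4 N Lam) (h5 : Cond5 N Lam)
    -- the spouse/children/sibling/parents selection functions provided by `2_Λ`, `3_Λ`
    (spouse child₁ child₂ sibling parent₁ parent₂ : Z2 → Z2)
    (hfam : ∀ j : ℕ, 1 ≤ j → j < N → ∀ n ∈ Lam j,
      NuclearFamily N Lam n (child₁ n) (spouse n) (child₂ n))
    (hfam' : ∀ j : ℕ, 1 ≤ j → j < N → ∀ n ∈ Lam (j + 1),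
      NuclearFamily N Lam (parent₁ n) n (parent₂ n) (sibling n))
    (I : Set ℝ) (hI : I.OrdConnected) (h0 : (0 : ℝ) ∈ I)
    (β : ℝ → Z2 → ℂ)
    -- `β` solves the finite ODE system on `Λ`
    (hβ : ∀ t ∈ I, ∀ j : ℕ, 1 ≤ j → j ≤ N → ∀ n ∈ Lam j,
      HasDerivAt (fun s => β s n)
        (Complex.I * (-(β t n) * (‖β t n‖ : ℂ) ^ 2
          + (if j < N then
              2 * β t (child₁ n) * β t (child₂ n) * (starRingEnd ℂ) (β t (spouse n))
            else 0)
          + (if 2 ≤ j then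
              2 * β t (parent₁ n) * β t (parent₂ n) * (starRingEnd ℂ) (β t (sibling n))
            else 0))) t)
    -- at time `0` all members of a generation take the same value
    (hinit : ∀ j : ℕ, 1 ≤ j → j ≤ N → ∀ n ∈ Lam j, ∀ n' ∈ Lam j, β 0 n = β 0 n') :
    -- then this persists for all times, and the common values solve the toy model
    (∀ t ∈ I, ∀ j : ℕ, 1 ≤ j → j ≤ N → ∀ n ∈ Lam j, ∀ n' ∈ Lam j, β t n = β t n') ∧
    ∃ b : ℝ → ℕ → ℂ,
      (∀ t ∈ I, ∀ j : ℕ, 1 ≤ j → j ≤ N → ∀ n ∈ Lam j, b t j = β t n) ∧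
      IsToySolution N I b := by
  classical
  -- generation bookkeeping for the families
  have hmemC : ∀ j : ℕ, 1 ≤ j → j < N → ∀ n ∈ Lam j,
      spouse n ∈ Lam j ∧ child₁ n ∈ Lam (j + 1) ∧ child₂ n ∈ Lam (j + 1) := by
    intro j hj1 hjN n hn
    obtain ⟨-, k, hk1, hkN, hnk, hsp, hc1, hc2⟩ := hfam j hj1 hjN n hn
    have hkj : k = j := by
      by_contra hne
      exact (Finset.disjoint_left.1
        (hdisj k (Finset.mem_Icc.2 ⟨hk1, hkN.le⟩) j (Finset.mem_Icc.2 ⟨hj1, hjN.le⟩) hne)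
        hnk) hn
    subst hkj
    exact ⟨hsp, hc1, hc2⟩
  have hmemP : ∀ j : ℕ, 1 ≤ j → j < N → ∀ n ∈ Lam (j + 1),
      sibling n ∈ Lam (j + 1) ∧ parent₁ n ∈ Lam j ∧ parent₂ n ∈ Lam j := by
    intro j hj1 hjN n hn
    obtain ⟨-, k, hk1, hkN, hp1, hp2, hnk, hsib⟩ := hfam' j hj1 hjN n hn
    have hkj : k = j := by
      by_contra hne
      have hne' : k + 1 ≠ j + 1 := by omega
      exact (Finset.disjoint_left.1
        (hdisj (k + 1) (Finset.mem_Icc.2 ⟨by omega, by omega⟩)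
          (j + 1) (Finset.mem_Icc.2 ⟨by omega, by omega⟩) hne') hnk) hn
    subst hkj
    exact ⟨hsib, hp1, hp2⟩
  have hUn : ∀ (m : Z2) (k : ℕ), 1 ≤ k → k ≤ N → m ∈ Lam k → m ∈ LamUnion N Lam :=
    fun m k hk1 hk2 hm => Finset.mem_biUnion.2 ⟨k, Finset.mem_Icc.2 ⟨hk1, hk2⟩, hm⟩
  -- the finite set of pairs of members of the same generation
  set Pairs : Finset (Z2 × Z2) := (Finset.Icc 1 N).biUnion (fun j => (Lam j) ×ˢ (Lam j))
    with hPairs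
  have hPmem : ∀ j : ℕ, 1 ≤ j → j ≤ N → ∀ n ∈ Lam j, ∀ n' ∈ Lam j, (n, n') ∈ Pairs := by
    intro j hj1 hjN n hn n' hn'
    exact Finset.mem_biUnion.2 ⟨j, Finset.mem_Icc.2 ⟨hj1, hjN⟩, Finset.mem_product.2 ⟨hn, hn'⟩⟩
  -- the vector of differences and its (pointwise) derivative
  set u : ℝ → (↥Pairs → ℂ) := fun t p => β t (p : Z2 × Z2).1 - β t (p : Z2 × Z2).2 with hu
  set F : ℝ → (↥Pairs → ℂ) :=
    fun t p => deriv (fun s => β s (p : Z2 × Z2).1 - β s (p : Z2 × Z2).2) t with hF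
  have hasD : ∀ s ∈ I, HasDerivAt u (F s) s := by
    intro s hs
    rw [hasDerivAt_pi]
    rintro ⟨⟨n, n'⟩, hq⟩
    obtain ⟨j, hj, hq2⟩ := Finset.mem_biUnion.1 hq
    rw [Finset.mem_Icc] at hj
    rw [Finset.mem_product] at hq2
    have hdn := hβ s hs j hj.1 hj.2 n hq2.1
    have hdn' := hβ s hs j hj.1 hj.2 n' hq2.2
    have hD := hdn.sub hdn'
    have hFv : F s ⟨(n, n'), hq⟩ = deriv (fun r => β r n - β r n') s := by simp [hF]
    have huv : (fun x => u x ⟨(n, n'), hq⟩) = fun r => β r n - β r n' := by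
      funext x; simp [hu]
    rw [huv, hFv, (show HasDerivAt (fun r => β r n - β r n') _ s from hD).deriv]
    exact hD
  have hpair : ∀ s : ℝ, ∀ m m' : Z2, (m, m') ∈ Pairs → ‖β s m - β s m'‖ ≤ ‖u s‖ := by
    intro s m m' hmm
    have := norm_le_pi_norm (f := u s) ⟨(m, m'), hmm⟩
    simpa [hu] using this
  -- the key linear bound on the derivative of the difference vector
  have hBound : ∀ s ∈ I, ∀ M : ℝ, 0 ≤ M → (∀ n ∈ LamUnion N Lam, ‖β s n‖ ≤ M) →
      ‖F s‖ ≤ 15 * M ^ 2 * ‖u s‖ := by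
    intro s hs M hM0 hMb
    have hnn : (0 : ℝ) ≤ 15 * M ^ 2 * ‖u s‖ := by positivity
    rw [pi_norm_le_iff_of_nonneg hnn]
    rintro ⟨⟨n, n'⟩, hq⟩
    obtain ⟨j, hj, hq2⟩ := Finset.mem_biUnion.1 hq
    rw [Finset.mem_Icc] at hj
    rw [Finset.mem_product] at hq2
    obtain ⟨hn, hn'⟩ := hq2
    have hdn := hβ s hs j hj.1 hj.2 n hn
    have hdn' := hβ s hs j hj.1 hj.2 n' hn'
    have hD := hdn.sub hdn'
    have hFv : F s ⟨(n, n'), hq⟩ = deriv (fun r => β r n - β r n') s := by simp [hF]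
    rw [hFv, (show HasDerivAt (fun r => β r n - β r n') _ s from hD).deriv, ← mul_sub, norm_mul, Complex.norm_I, one_mul]
    refine le_trans (norm_sub_add₃ _ _ _ _ _ _) ?_
    have hMn : ‖β s n‖ ≤ M := hMb n (hUn n j hj.1 hj.2 hn)
    have hMn' : ‖β s n'‖ ≤ M := hMb n' (hUn n' j hj.1 hj.2 hn')
    have hnormnorm : ∀ z : ℂ, ‖((‖z‖ : ℝ) : ℂ)‖ = ‖z‖ := fun z => by
      rw [Complex.norm_real, norm_norm]
    have hdnn : ‖β s n - β s n'‖ ≤ ‖u s‖ := hpair s n n' hq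
    have hA : ‖-(β s n) * ((‖β s n‖ : ℝ) : ℂ) ^ 2 - -(β s n') * ((‖β s n'‖ : ℝ) : ℂ) ^ 2‖
        ≤ 3 * M ^ 2 * ‖u s‖ := by
      have hrw : -(β s n) * ((‖β s n‖ : ℝ) : ℂ) ^ 2 - -(β s n') * ((‖β s n'‖ : ℝ) : ℂ) ^ 2
          = -((β s n) * ((‖β s n‖ : ℝ) : ℂ) * ((‖β s n‖ : ℝ) : ℂ)
            - (β s n') * ((‖β s n'‖ : ℝ) : ℂ) * ((‖β s n'‖ : ℝ) : ℂ)) := by ring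
      rw [hrw, norm_neg]
      have hMr : ‖((‖β s n‖ : ℝ) : ℂ)‖ ≤ M := by rw [hnormnorm]; exact hMn
      have hMr' : ‖((‖β s n'‖ : ℝ) : ℂ)‖ ≤ M := by rw [hnormnorm]; exact hMn'
      have hdr : ‖((‖β s n‖ : ℝ) : ℂ) - ((‖β s n'‖ : ℝ) : ℂ)‖ ≤ ‖u s‖ := by
        rw [← Complex.ofReal_sub, Complex.norm_real, Real.norm_eq_abs]
        exact le_trans (abs_norm_sub_norm_le _ _) hdnn
      exact tri_est hMn hMr hMr hMn' hMr' hdnn hdr hdr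
    have hB : ‖(if j < N then
          2 * β s (child₁ n) * β s (child₂ n) * (starRingEnd ℂ) (β s (spouse n)) else 0)
        - (if j < N then
          2 * β s (child₁ n') * β s (child₂ n') * (starRingEnd ℂ) (β s (spouse n')) else 0)‖
        ≤ 6 * M ^ 2 * ‖u s‖ := by
      by_cases hjN' : j < N
      · rw [if_pos hjN', if_pos hjN']
        obtain ⟨hsp, hc1, hc2⟩ := hmemC j hj.1 hjN' n hn
        obtain ⟨hsp', hc1', hc2'⟩ := hmemC j hj.1 hjN' n' hn'
        exact quad_est
          (hMb _ (hUn _ (j + 1) (by omega) (by omega) hc1))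
          (hMb _ (hUn _ (j + 1) (by omega) (by omega) hc2))
          (hMb _ (hUn _ j hj.1 hj.2 hsp))
          (hMb _ (hUn _ (j + 1) (by omega) (by omega) hc1'))
          (hMb _ (hUn _ (j + 1) (by omega) (by omega) hc2'))
          (hpair s _ _ (hPmem (j + 1) (by omega) (by omega) _ hc1 _ hc1'))
          (hpair s _ _ (hPmem (j + 1) (by omega) (by omega) _ hc2 _ hc2'))
          (hpair s _ _ (hPmem j hj.1 hj.2 _ hsp _ hsp'))
      · rw [if_neg hjN', if_neg hjN']
        simpa using (by positivity : (0 : ℝ) ≤ 6 * M ^ 2 * ‖u s‖)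
    have hC : ‖(if 2 ≤ j then
          2 * β s (parent₁ n) * β s (parent₂ n) * (starRingEnd ℂ) (β s (sibling n)) else 0)
        - (if 2 ≤ j then
          2 * β s (parent₁ n') * β s (parent₂ n') * (starRingEnd ℂ) (β s (sibling n')) else 0)‖
        ≤ 6 * M ^ 2 * ‖u s‖ := by
      by_cases h2j : 2 ≤ j
      · rw [if_pos h2j, if_pos h2j]
        obtain ⟨k, rfl⟩ : ∃ k, j = k + 1 := ⟨j - 1, by omega⟩
        obtain ⟨hsib, hp1, hp2⟩ := hmemP k (by omega) (by omega) n hn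
        obtain ⟨hsib', hp1', hp2'⟩ := hmemP k (by omega) (by omega) n' hn'
        exact quad_est
          (hMb _ (hUn _ k (by omega) (by omega) hp1))
          (hMb _ (hUn _ k (by omega) (by omega) hp2))
          (hMb _ (hUn _ (k + 1) (by omega) (by omega) hsib))
          (hMb _ (hUn _ k (by omega) (by omega) hp1'))
          (hMb _ (hUn _ k (by omega) (by omega) hp2'))
          (hpair s _ _ (hPmem k (by omega) (by omega) _ hp1 _ hp1'))
          (hpair s _ _ (hPmem k (by omega) (by omega) _ hp2 _ hp2'))
          (hpair s _ _ (hPmem (k + 1) (by omega) (by omega) _ hsib _ hsib'))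
      · rw [if_neg h2j, if_neg h2j]
        simpa using (by positivity : (0 : ℝ) ≤ 6 * M ^ 2 * ‖u s‖)
    linarith
  -- a bound for β on compact subintervals of I
  have hMex : ∀ a c : ℝ, Set.Icc a c ⊆ I →
      ∃ M : ℝ, 0 ≤ M ∧ ∀ s ∈ Set.Icc a c, ∀ n ∈ LamUnion N Lam, ‖β s n‖ ≤ M := by
    intro a c hsub
    have hwcont : ContinuousOn (fun s => (fun m : ↥(LamUnion N Lam) => β s (m : Z2)))
        (Set.Icc a c) := by
      rw [continuousOn_pi]
      intro m s hs
      obtain ⟨j, hj, hm⟩ := Finset.mem_biUnion.1 m.2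
      rw [Finset.mem_Icc] at hj
      exact ((hβ s (hsub hs) j hj.1 hj.2 m hm).continuousAt).continuousWithinAt
    obtain ⟨M0, hM0⟩ := isCompact_Icc.exists_bound_of_continuousOn hwcont
    refine ⟨max M0 0, le_max_right _ _, ?_⟩
    intro s hs n hn
    calc ‖β s n‖ = ‖(fun m : ↥(LamUnion N Lam) => β s (m : Z2)) ⟨n, hn⟩‖ := rfl
      _ ≤ ‖fun m : ↥(LamUnion N Lam) => β s (m : Z2)‖ :=
        norm_le_pi_norm (fun m : ↥(LamUnion N Lam) => β s (m : Z2)) ⟨n, hn⟩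
      _ ≤ M0 := hM0 s hs
      _ ≤ max M0 0 := le_max_left _ _
  have hzero : u 0 = 0 := by
    funext p
    obtain ⟨⟨n, n'⟩, hq⟩ := p
    obtain ⟨j, hj, hq2⟩ := Finset.mem_biUnion.1 hq
    rw [Finset.mem_Icc] at hj
    rw [Finset.mem_product] at hq2
    have : β 0 n - β 0 n' = 0 := sub_eq_zero.2 (hinit j hj.1 hj.2 n hq2.1 n' hq2.2)
    simpa [hu] using this
  -- the Grönwall argument
  have key : ∀ t ∈ I, u t = 0 := by
    intro t ht
    rcases le_total 0 t with h0t | ht0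
    · have hsub : Set.Icc 0 t ⊆ I := hI.out h0 ht
      obtain ⟨M, hM0, hMb⟩ := hMex 0 t hsub
      exact gron_zero u F (15 * M ^ 2) t h0t
        (fun s hs => hasD s (hsub hs))
        (fun s hs => hBound s (hsub hs) M hM0 (hMb s hs)) hzero
    · have hsub : Set.Icc t 0 ⊆ I := hI.out ht h0
      obtain ⟨M, hM0, hMb⟩ := hMex t 0 hsub
      exact gron_zero' u F (15 * M ^ 2) t ht0
        (fun s hs => hasD s (hsub hs))
        (fun s hs => hBound s (hsub hs) M hM0 (hMb s hs)) hzero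
  have part1 : ∀ t ∈ I, ∀ j : ℕ, 1 ≤ j → j ≤ N → ∀ n ∈ Lam j, ∀ n' ∈ Lam j,
      β t n = β t n' := by
    intro t ht j hj1 hjN n hn n' hn'
    have h := congrFun (key t ht) ⟨(n, n'), hPmem j hj1 hjN n hn n' hn'⟩
    have h' : β t n - β t n' = 0 := by simpa [hu] using h
    exact sub_eq_zero.1 h'
  refine ⟨part1, ?_⟩
  -- choice of representatives
  have hrepex : ∀ j : ℕ, ∃ m : Z2, (Lam j).Nonempty → m ∈ Lam j := by
    intro j
    by_cases h : (Lam j).Nonempty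
    · obtain ⟨m, hm⟩ := h; exact ⟨m, fun _ => hm⟩
    · exact ⟨(0, 0), fun h' => absurd h' h⟩
  choose rep hrepmem using hrepex
  set b : ℝ → ℕ → ℂ :=
    fun t k => if 1 ≤ k ∧ k ≤ N ∧ (Lam k).Nonempty then β t (rep k) else 0 with hbdef
  have hbz : ∀ (t : ℝ) (m : ℕ), m = 0 ∨ N < m → b t m = 0 := by
    intro t m hm
    simp only [hbdef]
    rw [if_neg]; rintro ⟨a1, a2, -⟩; omega
  have hcompat : ∀ t ∈ I, ∀ j : ℕ, 1 ≤ j → j ≤ N → ∀ n ∈ Lam j, b t j = β t n := by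
    intro t ht j hj1 hjN n hn
    simp only [hbdef]
    rw [if_pos ⟨hj1, hjN, ⟨n, hn⟩⟩]
    exact part1 t ht j hj1 hjN (rep j) (hrepmem j ⟨n, hn⟩) n hn
  refine ⟨b, hcompat, hbz, ?_⟩
  intro t ht j hj1 hjN
  by_cases hne : (Lam j).Nonempty
  · -- nonempty generation
    have hn0 : rep j ∈ Lam j := hrepmem j hne
    have hev : (fun s => b s j) =ᶠ[nhds t] (fun s => β s (rep j)) :=
      Filter.Eventually.of_forall (fun s => by
        simp only [hbdef]; rw [if_pos ⟨hj1, hjN, hne⟩])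
    have H := (hβ t ht j hj1 hjN (rep j) hn0).congr_of_eventuallyEq hev
    suffices hS : toyRHS (b t) j
        = Complex.I * (-(β t (rep j)) * ((‖β t (rep j)‖ : ℝ) : ℂ) ^ 2
          + (if j < N then
              2 * β t (child₁ (rep j)) * β t (child₂ (rep j))
                * (starRingEnd ℂ) (β t (spouse (rep j))) else 0)
          + (if 2 ≤ j then
              2 * β t (parent₁ (rep j)) * β t (parent₂ (rep j))
                * (starRingEnd ℂ) (β t (sibling (rep j))) else 0)) by
      rw [hS]; exact H
    have hvj : b t j = β t (rep j) := hcompat t ht j hj1 hjN (rep j) hn0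
    have hz2 : ((‖β t (rep j)‖ : ℝ) : ℂ) ^ 2
        = β t (rep j) * (starRingEnd ℂ) (β t (rep j)) := by
      rw [Complex.mul_conj, ← Complex.ofReal_pow, Complex.sq_norm]
    simp only [toyRHS]
    by_cases hjN' : j < N
    · obtain ⟨hsp, hc1, hc2⟩ := hmemC j hj1 hjN' (rep j) hn0
      have hvj1 : b t (j + 1) = β t (child₁ (rep j)) :=
        hcompat t ht (j + 1) (by omega) (by omega) _ hc1
      have ec2 : β t (child₂ (rep j)) = β t (child₁ (rep j)) :=
        part1 t ht (j + 1) (by omega) (by omega) _ hc2 _ hc1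
      have esp : β t (spouse (rep j)) = β t (rep j) :=
        part1 t ht j hj1 hjN _ hsp _ hn0
      rw [if_pos hjN']
      by_cases h2j : 2 ≤ j
      · rw [if_pos h2j]
        obtain ⟨k, rfl⟩ : ∃ k, j = k + 1 := ⟨j - 1, by omega⟩
        obtain ⟨hsib, hp1, hp2⟩ := hmemP k (by omega) (by omega) (rep (k + 1)) hn0
        have hvjm : b t (k + 1 - 1) = β t (parent₁ (rep (k + 1))) := by
          simp only [Nat.add_sub_cancel]
          exact hcompat t ht k (by omega) (by omega) _ hp1
        have ep2 : β t (parent₂ (rep (k + 1))) = β t (parent₁ (rep (k + 1))) :=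
          part1 t ht k (by omega) (by omega) _ hp2 _ hp1
        have esib : β t (sibling (rep (k + 1))) = β t (rep (k + 1)) :=
          part1 t ht (k + 1) (by omega) (by omega) _ hsib _ hn0
        rw [hvj, hvj1, hvjm, ec2, esp, ep2, esib, hz2]
        ring
      · rw [if_neg h2j]
        have hj1' : j = 1 := by omega
        subst hj1'
        have hvjm : b t (1 - 1) = 0 := hbz t 0 (Or.inl rfl)
        rw [hvj, hvj1, hvjm, ec2, esp, hz2]
        ring
    · rw [if_neg hjN']
      have hvj1 : b t (j + 1) = 0 := hbz t (j + 1) (Or.inr (by omega))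
      by_cases h2j : 2 ≤ j
      · rw [if_pos h2j]
        obtain ⟨k, rfl⟩ : ∃ k, j = k + 1 := ⟨j - 1, by omega⟩
        obtain ⟨hsib, hp1, hp2⟩ := hmemP k (by omega) (by omega) (rep (k + 1)) hn0
        have hvjm : b t (k + 1 - 1) = β t (parent₁ (rep (k + 1))) := by
          simp only [Nat.add_sub_cancel]
          exact hcompat t ht k (by omega) (by omega) _ hp1
        have ep2 : β t (parent₂ (rep (k + 1))) = β t (parent₁ (rep (k + 1))) :=
          part1 t ht k (by omega) (by omega) _ hp2 _ hp1
        have esib : β t (sibling (rep (k + 1))) = β t (rep (k + 1)) :=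
          part1 t ht (k + 1) (by omega) (by omega) _ hsib _ hn0
        rw [hvj, hvj1, hvjm, ep2, esib, hz2]
        ring
      · rw [if_neg h2j]
        have hj1' : j = 1 := by omega
        subst hj1'
        have hvjm : b t (1 - 1) = 0 := hbz t 0 (Or.inl rfl)
        rw [hvj, hvj1, hvjm, hz2]
        ring
  · -- empty generation: b ⬝ j is identically 0
    have hfun : (fun s => b s j) = fun _ => (0 : ℂ) := by
      funext s
      simp only [hbdef]
      rw [if_neg]
      rintro ⟨-, -, h⟩; exact hne h
    have hbj0 : b t j = 0 := by
      simp only [hbdef]; rw [if_neg]; rintro ⟨-, -, h⟩; exact hne h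
    have hRHS : toyRHS (b t) j = 0 := by
      simp [toyRHS, hbj0]
    rw [hfun, hRHS]
    exact hasDerivAt_const t 0

end
end

section
/- Along every solution b : I → ℂ^N of the toy model, both the Hamiltonian h(b(t)) and the mass M(b(t)) are constant in t. -/
/-! STATEMENT 8: conservation of the Hamiltonian and the mass along toy-model solutions. -/

noncomputable section

open Complex

/-- the Hamiltonian of the toy model -/
def hToy (N : ℕ) (b : ℕ → ℂ) : ℂ :=
  (1 / 4) * ∑ j ∈ Finset.Icc 1 N, (‖b j‖ : ℂ) ^ 4
    - (1 / 2) * ∑ j ∈ Finset.Icc 2 N,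
        ((starRingEnd ℂ) (b j) ^ 2 * (b (j - 1)) ^ 2
          + (b j) ^ 2 * (starRingEnd ℂ) (b (j - 1)) ^ 2)

/-- the mass of the toy model -/
def massToy (N : ℕ) (b : ℕ → ℂ) : ℝ := ∑ j ∈ Finset.Icc 1 N, ‖b j‖ ^ 2

/-- telescoping quantity for the mass -/
private def Gtel (z : ℕ → ℂ) (j : ℕ) : ℂ :=
  2 * Complex.I * ((starRingEnd ℂ) (z j) ^ 2 * z (j - 1) ^ 2
    - z j ^ 2 * (starRingEnd ℂ) (z (j - 1)) ^ 2)

/-- telescoping quantity for the Hamiltonian -/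
private def Ttel (z : ℕ → ℂ) (j : ℕ) : ℂ :=
  Complex.I * (2 * (starRingEnd ℂ) (z (j - 2)) ^ 2 * (starRingEnd ℂ) (z (j - 1))
        * z (j - 1) * z j ^ 2
    - 2 * (starRingEnd ℂ) (z (j - 1)) * (starRingEnd ℂ) (z j) ^ 2 * z (j - 2) ^ 2 * z (j - 1)
    + (starRingEnd ℂ) (z (j - 1)) * (starRingEnd ℂ) (z j) ^ 2 * z (j - 1) ^ 3
    - (starRingEnd ℂ) (z (j - 1)) ^ 3 * z (j - 1) * z j ^ 2)

private lemma telescope (T : ℕ → ℂ) (N : ℕ) :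
    ∑ j ∈ Finset.Icc 1 N, (T j - T (j + 1)) = T 1 - T (N + 1) := by
  rw [show Finset.Icc 1 N = Finset.Ico 1 (N + 1) from (Finset.Ico_add_one_right_eq_Icc (a := 1) (b := N)).symm,
    Finset.sum_Ico_eq_sum_range]
  simp only [Nat.add_sub_cancel]
  have h := Finset.sum_range_sub' (fun i => T (1 + i)) N
  simpa [add_comm] using h

private lemma const_of_deriv_zero {E : Type*} [NormedAddCommGroup E] [NormedSpace ℝ E]
    {f : ℝ → E} {I : Set ℝ} (hI : Convex ℝ I)
    (h : ∀ t ∈ I, HasDerivAt f 0 t) :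
    ∀ t ∈ I, ∀ t' ∈ I, f t = f t' := by
  intro t ht t' ht'
  have key : ‖f t - f t'‖ ≤ 0 * ‖t - t'‖ := by
    refine hI.norm_image_sub_le_of_norm_hasFDerivWithin_le
      (f' := fun _ => (0 : ℝ →L[ℝ] E)) (fun x hx => ?_) (fun x hx => by simp) ht' ht
    have h0 := ((h x hx).hasFDerivAt).hasFDerivWithinAt (s := I)
    simpa using h0
  have h1 : ‖f t - f t'‖ ≤ 0 := by simpa using key
  have h2 := le_antisymm h1 (norm_nonneg _)
  rwa [norm_eq_zero, sub_eq_zero] at h2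

private lemma mass_step (z : ℕ → ℂ) (hz0 : z 0 = 0) (j : ℕ) (hj : 1 ≤ j) :
    toyRHS z j * (starRingEnd ℂ) (z j) + z j * (starRingEnd ℂ) (toyRHS z j)
      = Gtel z j - Gtel z (j + 1) := by
  obtain ⟨k, rfl⟩ : ∃ k, j = k + 1 := ⟨j - 1, by omega⟩
  cases k with
  | zero =>
      simp only [toyRHS, Gtel, show (0 + 1 : ℕ) - 1 = 0 from rfl,
        show (0 + 1 + 1 : ℕ) - 1 = 0 + 1 from rfl, hz0, map_add, map_mul, map_neg,
        map_pow, map_ofNat, map_zero, Complex.conj_conj, Complex.conj_I]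
      ring
  | succ k =>
      simp only [toyRHS, Gtel, show (k + 1 + 1 : ℕ) - 1 = k + 1 from rfl,
        show (k + 1 + 1 + 1 : ℕ) - 1 = k + 1 + 1 from rfl, map_add, map_mul, map_neg,
        map_pow, map_ofNat, Complex.conj_conj, Complex.conj_I]
      ring

private lemma ham_step (z : ℕ → ℂ) (hz0 : z 0 = 0) (j : ℕ) (hj : 1 ≤ j) :
    (1 / 4 : ℂ) * (2 * (z j * (starRingEnd ℂ) (z j)) *
        (toyRHS z j * (starRingEnd ℂ) (z j) + z j * (starRingEnd ℂ) (toyRHS z j)))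
      - (1 / 2 : ℂ) * (2 * (starRingEnd ℂ) (z j) * (starRingEnd ℂ) (toyRHS z j) * z (j - 1) ^ 2
          + (starRingEnd ℂ) (z j) ^ 2 * (2 * z (j - 1) * toyRHS z (j - 1))
          + 2 * z j * toyRHS z j * (starRingEnd ℂ) (z (j - 1)) ^ 2
          + z j ^ 2 * (2 * (starRingEnd ℂ) (z (j - 1)) * (starRingEnd ℂ) (toyRHS z (j - 1))))
      = Ttel z j - Ttel z (j + 1) := by
  obtain ⟨k, rfl⟩ : ∃ k, j = k + 1 := ⟨j - 1, by omega⟩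
  cases k with
  | zero =>
      simp only [toyRHS, Ttel, show (0 + 1 : ℕ) - 1 = 0 from rfl,
        show (0 : ℕ) - 1 = 0 from rfl, show (0 + 1 : ℕ) - 2 = 0 from rfl,
        show (0 + 1 + 1 : ℕ) - 1 = 0 + 1 from rfl, show (0 + 1 + 1 : ℕ) - 2 = 0 from rfl,
        hz0, map_add, map_mul, map_neg, map_pow, map_ofNat, map_zero,
        Complex.conj_conj, Complex.conj_I]
      ring
  | succ k =>
      simp only [toyRHS, Ttel, show (k + 1 + 1 : ℕ) - 1 = k + 1 from rfl,
        show (k + 1 : ℕ) - 1 = k from rfl, show (k + 1 + 1 : ℕ) - 2 = k from rfl,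
        show (k + 1 + 1 + 1 : ℕ) - 1 = k + 1 + 1 from rfl,
        show (k + 1 + 1 + 1 : ℕ) - 2 = k + 1 from rfl, map_add, map_mul, map_neg,
        map_pow, map_ofNat, Complex.conj_conj, Complex.conj_I]
      ring

private lemma norm4 (w : ℂ) :
    ((‖w‖ : ℂ)) ^ 4 = (w * (starRingEnd ℂ) w) ^ 2 := by
  rw [Complex.mul_conj]
  norm_cast
  rw [Complex.normSq_eq_norm_sq]
  ring

set_option maxHeartbeats 1000000 in
theorem stmt8 (N : ℕ) (I : Set ℝ) (hI : I.OrdConnected)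
    (b : ℝ → ℕ → ℂ) (hb : IsToySolution N I b) :
    ∀ t ∈ I, ∀ t' ∈ I,
      hToy N (b t) = hToy N (b t') ∧ massToy N (b t) = massToy N (b t') := by
  obtain ⟨hsupp, hode⟩ := hb
  have hconv : Convex ℝ I := convex_iff_ordConnected.mpr hI
  have hz0 : ∀ s, b s 0 = 0 := fun s => hsupp s 0 (Or.inl rfl)
  have hzN : ∀ s, b s (N + 1) = 0 := fun s => hsupp s (N + 1) (Or.inr (by omega))
  -- uniform derivative statement for all indices
  have hder : ∀ t ∈ I, ∀ j : ℕ, HasDerivAt (fun s => b s j) (toyRHS (b t) j) t := by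
    intro t ht j
    by_cases hj : 1 ≤ j ∧ j ≤ N
    · exact hode t ht j hj.1 hj.2
    · have hj' : j = 0 ∨ N < j := by omega
      have hz : ∀ s, b s j = 0 := fun s => hsupp s j hj'
      have h0 : toyRHS (b t) j = 0 := by simp [toyRHS, hz t]
      rw [h0, show (fun s => b s j) = fun _ => (0 : ℂ) from funext hz]
      exact hasDerivAt_const t 0
  have hderc : ∀ t ∈ I, ∀ j : ℕ,
      HasDerivAt (fun s => (starRingEnd ℂ) (b s j)) ((starRingEnd ℂ) (toyRHS (b t) j)) t := by
    intro t ht j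
    simpa only [starRingEnd_apply] using (hder t ht j).star
  -- ## Mass conservation
  have hPconst : ∀ t ∈ I, ∀ t' ∈ I,
      (∑ j ∈ Finset.Icc 1 N, b t j * (starRingEnd ℂ) (b t j))
        = ∑ j ∈ Finset.Icc 1 N, b t' j * (starRingEnd ℂ) (b t' j) := by
    apply const_of_deriv_zero hconv
    intro t ht
    have hsum : HasDerivAt (fun s => ∑ j ∈ Finset.Icc 1 N, b s j * (starRingEnd ℂ) (b s j))
        (∑ j ∈ Finset.Icc 1 N,
          (toyRHS (b t) j * (starRingEnd ℂ) (b t j)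
            + b t j * (starRingEnd ℂ) (toyRHS (b t) j))) t :=
      HasDerivAt.fun_sum fun j _ => (hder t ht j).mul (hderc t ht j)
    have hval : (∑ j ∈ Finset.Icc 1 N,
        (toyRHS (b t) j * (starRingEnd ℂ) (b t j)
          + b t j * (starRingEnd ℂ) (toyRHS (b t) j))) = 0 := by
      rw [Finset.sum_congr rfl
        (fun j hj => mass_step (b t) (hz0 t) j (Finset.mem_Icc.mp hj).1), telescope]
      have e1 : Gtel (b t) 1 = 0 := by
        simp [Gtel, show (1 : ℕ) - 1 = 0 from rfl, hz0 t]
      have e2 : Gtel (b t) (N + 1) = 0 := by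
        simp [Gtel, hzN t]
      rw [e1, e2, sub_zero]
    rw [← hval]
    exact hsum
  -- ## Hamiltonian conservation
  have hHconst : ∀ t ∈ I, ∀ t' ∈ I,
      ((1 / 4 : ℂ) * ∑ j ∈ Finset.Icc 1 N, (b t j * (starRingEnd ℂ) (b t j)) ^ 2
        - (1 / 2 : ℂ) * ∑ j ∈ Finset.Icc 2 N,
            ((starRingEnd ℂ) (b t j) ^ 2 * (b t (j - 1)) ^ 2
              + (b t j) ^ 2 * (starRingEnd ℂ) (b t (j - 1)) ^ 2))
      = ((1 / 4 : ℂ) * ∑ j ∈ Finset.Icc 1 N, (b t' j * (starRingEnd ℂ) (b t' j)) ^ 2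
        - (1 / 2 : ℂ) * ∑ j ∈ Finset.Icc 2 N,
            ((starRingEnd ℂ) (b t' j) ^ 2 * (b t' (j - 1)) ^ 2
              + (b t' j) ^ 2 * (starRingEnd ℂ) (b t' (j - 1)) ^ 2)) := by
    apply const_of_deriv_zero hconv
    intro t ht
    have hA : ∀ j : ℕ, HasDerivAt (fun s => (b s j * (starRingEnd ℂ) (b s j)) ^ 2)
        (2 * (b t j * (starRingEnd ℂ) (b t j))
          * (toyRHS (b t) j * (starRingEnd ℂ) (b t j)
             + b t j * (starRingEnd ℂ) (toyRHS (b t) j))) t := by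
      intro j
      have hm := (hder t ht j).mul (hderc t ht j)
      have h := hm.mul hm
      simp only [pow_two]
      exact h.congr_deriv (by simp only [Pi.mul_apply]; ring)
    have hB : ∀ j : ℕ, HasDerivAt (fun s =>
        (starRingEnd ℂ) (b s j) ^ 2 * (b s (j - 1)) ^ 2
          + (b s j) ^ 2 * (starRingEnd ℂ) (b s (j - 1)) ^ 2)
        (2 * (starRingEnd ℂ) (b t j) * (starRingEnd ℂ) (toyRHS (b t) j) * b t (j - 1) ^ 2
          + (starRingEnd ℂ) (b t j) ^ 2 * (2 * b t (j - 1) * toyRHS (b t) (j - 1))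
          + 2 * b t j * toyRHS (b t) j * (starRingEnd ℂ) (b t (j - 1)) ^ 2
          + b t j ^ 2 * (2 * (starRingEnd ℂ) (b t (j - 1))
              * (starRingEnd ℂ) (toyRHS (b t) (j - 1)))) t := by
      intro j
      have h1 := hderc t ht j
      have h2 := hder t ht (j - 1)
      have h3 := hder t ht j
      have h4 := hderc t ht (j - 1)
      have h := ((h1.mul h1).mul (h2.mul h2)).add ((h3.mul h3).mul (h4.mul h4))
      simp only [pow_two]
      exact h.congr_deriv (by simp only [Pi.mul_apply]; ring)
    have hsum : HasDerivAt (fun s =>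
        (1 / 4 : ℂ) * ∑ j ∈ Finset.Icc 1 N, (b s j * (starRingEnd ℂ) (b s j)) ^ 2
          - (1 / 2 : ℂ) * ∑ j ∈ Finset.Icc 2 N,
              ((starRingEnd ℂ) (b s j) ^ 2 * (b s (j - 1)) ^ 2
                + (b s j) ^ 2 * (starRingEnd ℂ) (b s (j - 1)) ^ 2))
        ((1 / 4 : ℂ) * ∑ j ∈ Finset.Icc 1 N,
            (2 * (b t j * (starRingEnd ℂ) (b t j))
              * (toyRHS (b t) j * (starRingEnd ℂ) (b t j)
                 + b t j * (starRingEnd ℂ) (toyRHS (b t) j)))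
          - (1 / 2 : ℂ) * ∑ j ∈ Finset.Icc 2 N,
            (2 * (starRingEnd ℂ) (b t j) * (starRingEnd ℂ) (toyRHS (b t) j) * b t (j - 1) ^ 2
              + (starRingEnd ℂ) (b t j) ^ 2 * (2 * b t (j - 1) * toyRHS (b t) (j - 1))
              + 2 * b t j * toyRHS (b t) j * (starRingEnd ℂ) (b t (j - 1)) ^ 2
              + b t j ^ 2 * (2 * (starRingEnd ℂ) (b t (j - 1))
                  * (starRingEnd ℂ) (toyRHS (b t) (j - 1))))) t :=
      ((HasDerivAt.fun_sum fun j _ => hA j).const_mul (1 / 4 : ℂ)).sub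
        ((HasDerivAt.fun_sum fun j _ => hB j).const_mul (1 / 2 : ℂ))
    have hBval : (∑ j ∈ Finset.Icc 2 N,
        (2 * (starRingEnd ℂ) (b t j) * (starRingEnd ℂ) (toyRHS (b t) j) * b t (j - 1) ^ 2
          + (starRingEnd ℂ) (b t j) ^ 2 * (2 * b t (j - 1) * toyRHS (b t) (j - 1))
          + 2 * b t j * toyRHS (b t) j * (starRingEnd ℂ) (b t (j - 1)) ^ 2
          + b t j ^ 2 * (2 * (starRingEnd ℂ) (b t (j - 1))
              * (starRingEnd ℂ) (toyRHS (b t) (j - 1)))))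
        = ∑ j ∈ Finset.Icc 1 N,
        (2 * (starRingEnd ℂ) (b t j) * (starRingEnd ℂ) (toyRHS (b t) j) * b t (j - 1) ^ 2
          + (starRingEnd ℂ) (b t j) ^ 2 * (2 * b t (j - 1) * toyRHS (b t) (j - 1))
          + 2 * b t j * toyRHS (b t) j * (starRingEnd ℂ) (b t (j - 1)) ^ 2
          + b t j ^ 2 * (2 * (starRingEnd ℂ) (b t (j - 1))
              * (starRingEnd ℂ) (toyRHS (b t) (j - 1)))) := by
      apply Finset.sum_subset (Finset.Icc_subset_Icc (by norm_num) le_rfl)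
      intro j hj hj2
      have hj1 : j = 1 := by
        simp only [Finset.mem_Icc] at hj hj2
        omega
      subst hj1
      have h0 : b t 0 = 0 := hz0 t
      simp [show (1 : ℕ) - 1 = 0 from rfl, h0]
    have hval : ((1 / 4 : ℂ) * ∑ j ∈ Finset.Icc 1 N,
            (2 * (b t j * (starRingEnd ℂ) (b t j))
              * (toyRHS (b t) j * (starRingEnd ℂ) (b t j)
                 + b t j * (starRingEnd ℂ) (toyRHS (b t) j)))
          - (1 / 2 : ℂ) * ∑ j ∈ Finset.Icc 2 N,
            (2 * (starRingEnd ℂ) (b t j) * (starRingEnd ℂ) (toyRHS (b t) j) * b t (j - 1) ^ 2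
              + (starRingEnd ℂ) (b t j) ^ 2 * (2 * b t (j - 1) * toyRHS (b t) (j - 1))
              + 2 * b t j * toyRHS (b t) j * (starRingEnd ℂ) (b t (j - 1)) ^ 2
              + b t j ^ 2 * (2 * (starRingEnd ℂ) (b t (j - 1))
                  * (starRingEnd ℂ) (toyRHS (b t) (j - 1)))))
          = 0 := by
      rw [hBval, Finset.mul_sum, Finset.mul_sum, ← Finset.sum_sub_distrib]
      rw [Finset.sum_congr rfl
        (fun j hj => ham_step (b t) (hz0 t) j (Finset.mem_Icc.mp hj).1), telescope]
      have e1 : Ttel (b t) 1 = 0 := by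
        simp [Ttel, show (1 : ℕ) - 1 = 0 from rfl, show (1 : ℕ) - 2 = 0 from rfl, hz0 t]
      have e2 : Ttel (b t) (N + 1) = 0 := by
        simp [Ttel, Nat.add_sub_cancel, hzN t]
      rw [e1, e2, sub_zero]
    rw [← hval]
    exact hsum
  -- ## conclusion
  intro t ht t' ht'
  constructor
  · have h1 : ∀ s, hToy N (b s)
        = (1 / 4 : ℂ) * ∑ j ∈ Finset.Icc 1 N, (b s j * (starRingEnd ℂ) (b s j)) ^ 2
          - (1 / 2 : ℂ) * ∑ j ∈ Finset.Icc 2 N,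
              ((starRingEnd ℂ) (b s j) ^ 2 * (b s (j - 1)) ^ 2
                + (b s j) ^ 2 * (starRingEnd ℂ) (b s (j - 1)) ^ 2) := by
      intro s
      simp only [hToy, norm4]
    rw [h1 t, h1 t', hHconst t ht t' ht']
  · have h2 : ∀ s, massToy N (b s)
        = (∑ j ∈ Finset.Icc 1 N, b s j * (starRingEnd ℂ) (b s j)).re := by
      intro s
      rw [massToy, Complex.re_sum]
      refine Finset.sum_congr rfl fun j _ => ?_
      rw [Complex.mul_conj, Complex.ofReal_re, Complex.normSq_eq_norm_sq]
    rw [h2 t, h2 t', hPconst t ht t' ht']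

end
end

section
/- Fix 1 ≤ j ≤ N−1 and let b : I → ℂ^N be a solution of the toy model such that for some t₀ ∈ I one has b_k(t₀) = 0 for every k ∉ {j, j+1}. Then b_k(t) = 0 for every t ∈ I and every k ∉ {j, j+1}, and the pair (b_j, b_{j+1}) solves the two-mode system (d/dt) b_j = −i b_j² conj(b_j) + 2i conj(b_j) b_{j+1}², (d/dt) b_{j+1} = −i b_{j+1}² conj(b_{j+1}) + 2i conj(b_{j+1}) b_j². -/
/-! STATEMENT 11: invariance of the planes L_j = {b_k = 0 for k ∉ {j, j+1}} for the toy model, and the induced two-mode system. -/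

noncomputable section

open Complex

/-- Grönwall-type uniqueness: a function with `‖F'‖ ≤ K ‖F‖` on an interval that
vanishes at an interior point vanishes on the whole interval. -/
lemma aux_zero_of_deriv_bound {E : Type*} [NormedAddCommGroup E] [NormedSpace ℝ E]
    {F F' : ℝ → E} {a d c K : ℝ} (hc : c ∈ Set.Icc a d)
    (hF : ∀ s ∈ Set.Icc a d, HasDerivAt F (F' s) s)
    (hbound : ∀ s ∈ Set.Icc a d, ‖F' s‖ ≤ K * ‖F s‖)
    (h0 : F c = 0) : ∀ s ∈ Set.Icc a d, F s = 0 := by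
  have fwd : ∀ s ∈ Set.Icc c d, F s = 0 := by
    have hsub : Set.Icc c d ⊆ Set.Icc a d := Set.Icc_subset_Icc hc.1 le_rfl
    intro s hs
    have h := norm_le_gronwallBound_of_norm_deriv_right_le
      (f := F) (f' := F') (δ := 0) (K := K) (ε := 0) (a := c) (b := d)
      (fun x hx => (hF x (hsub hx)).continuousAt.continuousWithinAt)
      (fun x hx => (hF x (hsub (Set.Ico_subset_Icc_self hx))).hasDerivWithinAt)
      (by simp [h0])
      (fun x hx => by simpa using hbound x (hsub (Set.Ico_subset_Icc_self hx)))
      s hs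
    rw [gronwallBound_ε0_δ0] at h
    simpa using le_antisymm h (norm_nonneg _)
  have bwd : ∀ s ∈ Set.Icc a c, F s = 0 := by
    have hmem : ∀ s ∈ Set.Icc a c, a + c - s ∈ Set.Icc a d := by
      intro s hs
      obtain ⟨h1, h2⟩ := hs
      exact ⟨by linarith, by linarith [hc.2]⟩
    have hG : ∀ s ∈ Set.Icc a c, HasDerivAt (fun u => F (a + c - u)) (-F' (a + c - s)) s := by
      intro s hs
      have h1 : HasDerivAt (fun u : ℝ => a + c - u) (-1) s := by
        simpa using (hasDerivAt_id s).const_sub (a + c)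
      have h2 := (hF _ (hmem s hs)).scomp s h1
      simpa [Function.comp_def] using h2
    intro s hs
    have h := norm_le_gronwallBound_of_norm_deriv_right_le
      (f := fun u => F (a + c - u)) (f' := fun u => -F' (a + c - u))
      (δ := 0) (K := K) (ε := 0) (a := a) (b := c)
      (fun x hx => ((hG x hx).continuousAt).continuousWithinAt)
      (fun x hx => (hG x (Set.Ico_subset_Icc_self hx)).hasDerivWithinAt)
      (by simp [h0])
      (fun x hx => by
        simpa using hbound _ (hmem x (Set.Ico_subset_Icc_self hx)))
      (a + c - s) ⟨by linarith [hs.2], by linarith [hs.1]⟩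
    rw [gronwallBound_ε0_δ0] at h
    have e : a + c - (a + c - s) = s := by ring
    have h2 := le_antisymm h (norm_nonneg _)
    rw [norm_eq_zero] at h2
    simpa [e] using h2
  intro s hs
  rcases le_total s c with h | h
  · exact bwd s ⟨hs.1, h⟩
  · exact fwd s ⟨h, hs.2⟩

theorem stmt11 (N j : ℕ) (hj1 : 1 ≤ j) (hj2 : j + 1 ≤ N)
    (I : Set ℝ) (hI : I.OrdConnected)
    (b : ℝ → ℕ → ℂ) (hb : IsToySolution N I b)
    (t₀ : ℝ) (ht₀ : t₀ ∈ I)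
    (hzero : ∀ k : ℕ, k ≠ j → k ≠ j + 1 → b t₀ k = 0) :
    (∀ t ∈ I, ∀ k : ℕ, k ≠ j → k ≠ j + 1 → b t k = 0) ∧
    ∀ t ∈ I,
      HasDerivAt (fun s => b s j)
        (-Complex.I * (b t j) ^ 2 * (starRingEnd ℂ) (b t j)
          + 2 * Complex.I * (starRingEnd ℂ) (b t j) * (b t (j + 1)) ^ 2) t ∧
      HasDerivAt (fun s => b s (j + 1))
        (-Complex.I * (b t (j + 1)) ^ 2 * (starRingEnd ℂ) (b t (j + 1))
          + 2 * Complex.I * (starRingEnd ℂ) (b t (j + 1)) * (b t j) ^ 2) t := by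
  classical
  obtain ⟨hb0, hbd⟩ := hb
  have hjN : j ≤ N := by omega
  have part1 : ∀ t ∈ I, ∀ k : ℕ, k ≠ j → k ≠ j + 1 → b t k = 0 := by
    intro t ht k hk1 hk2
    by_cases hkN : 1 ≤ k ∧ k ≤ N
    swap
    · exact hb0 t k (by omega)
    obtain ⟨hk1', hkN'⟩ := hkN
    set F : ℝ → Fin (N + 1) → ℂ := fun s i =>
      if (i : ℕ) = j ∨ (i : ℕ) = j + 1 then 0 else b s i with hFdef
    set F' : ℝ → Fin (N + 1) → ℂ := fun s i =>
      if (i : ℕ) = j ∨ (i : ℕ) = j + 1 ∨ (i : ℕ) = 0 then 0 else toyRHS (b s) i with hF'def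
    set a := min t t₀ with hadef
    set d := max t t₀ with hddef
    have ha : a ∈ I := by
      rcases le_total t t₀ with h | h
      · simpa [hadef, min_eq_left h] using ht
      · simpa [hadef, min_eq_right h] using ht₀
    have hd : d ∈ I := by
      rcases le_total t t₀ with h | h
      · simpa [hddef, max_eq_right h] using ht₀
      · simpa [hddef, max_eq_left h] using ht
    have hsub : Set.Icc a d ⊆ I := hI.out ha hd
    have ht₀m : t₀ ∈ Set.Icc a d := ⟨min_le_right _ _, le_max_right _ _⟩
    have htm : t ∈ Set.Icc a d := ⟨min_le_left _ _, le_max_left _ _⟩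
    -- derivative of F
    have hder : ∀ s ∈ Set.Icc a d, HasDerivAt F (F' s) s := by
      intro s hs
      rw [hasDerivAt_pi]
      intro i
      by_cases hij : (i : ℕ) = j ∨ (i : ℕ) = j + 1
      · have e1 : (fun u => F u i) = fun _ => (0 : ℂ) := by
          funext u; simp [hFdef, hij]
        have e2 : F' s i = 0 := by
          rcases hij with h | h <;> simp [hF'def, h]
        rw [e1, e2]
        exact hasDerivAt_const _ _
      · push_neg at hij
        by_cases hi0 : (i : ℕ) = 0
        · have e1 : (fun u => F u i) = fun _ => (0 : ℂ) := by
            funext u; simp [hFdef, hij.1, hij.2, hb0 u i (Or.inl hi0)]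
          have e2 : F' s i = 0 := by simp only [hF'def]; exact if_pos (Or.inr (Or.inr hi0))
          rw [e1, e2]
          exact hasDerivAt_const _ _
        · have h1i : 1 ≤ (i : ℕ) := by omega
          have hiN : (i : ℕ) ≤ N := by omega
          have hD := hbd s (hsub hs) i h1i hiN
          have e1 : (fun u => F u i) = fun u => b u i := by
            funext u; simp [hFdef, hij.1, hij.2]
          have e2 : F' s i = toyRHS (b s) i := by simp only [hF'def]; exact if_neg (by omega)
          rw [e1, e2]
          exact hD
    -- a uniform bound on all modes on the compact interval
    have hBcont : ContinuousOn (fun s (i : Fin (N + 2)) => b s i) (Set.Icc a d) := by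
      rw [continuousOn_pi]
      intro i
      by_cases hi : (i : ℕ) = 0 ∨ N < (i : ℕ)
      · have e : (fun s => b s i) = fun _ => (0 : ℂ) := funext fun s => hb0 s i hi
        rw [e]; exact continuousOn_const
      · push_neg at hi
        intro s hs
        exact ((hbd s (hsub hs) i (by omega) (by omega)).continuousAt).continuousWithinAt
    obtain ⟨R, hR⟩ := isCompact_Icc.exists_bound_of_continuousOn hBcont
    have hR0 : 0 ≤ R := by
      have hamem : a ∈ Set.Icc a d := ⟨le_rfl, min_le_max⟩
      exact (norm_nonneg _).trans (hR a hamem)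
    -- the Grönwall bound
    have hbound : ∀ s ∈ Set.Icc a d, ‖F' s‖ ≤ (5 * R ^ 2) * ‖F s‖ := by
      intro s hs
      have hRb : ∀ m : ℕ, m ≤ N + 1 → ‖b s m‖ ≤ R := by
        intro m hm
        have h1 := norm_le_pi_norm (fun i : Fin (N + 2) => b s i) ⟨m, by omega⟩
        exact h1.trans (hR s hs)
      have hK0 : (0 : ℝ) ≤ 5 * R ^ 2 * ‖F s‖ := by positivity
      rw [pi_norm_le_iff_of_nonneg hK0]
      intro i
      by_cases hij : (i : ℕ) = j ∨ (i : ℕ) = j + 1 ∨ (i : ℕ) = 0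
      · have e : F' s i = 0 := by
          rcases hij with h | h | h
          · simp [hF'def, h]
          · simp [hF'def, h]
          · simp only [hF'def]; exact if_pos (Or.inr (Or.inr h))
        rw [e]; simpa using hK0
      · push_neg at hij
        have hFi : F s i = b s i := by simp [hFdef, hij.1, hij.2.1]
        have hFle : ‖b s (i : ℕ)‖ ≤ ‖F s‖ := by
          rw [← hFi]; exact norm_le_pi_norm (F s) i
        have e : F' s i = toyRHS (b s) i := by simp only [hF'def]; exact if_neg (by omega)
        rw [e]
        have hb1 : ‖b s (i : ℕ)‖ ≤ R := hRb _ (by omega)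
        have hb2 : ‖b s ((i : ℕ) - 1)‖ ≤ R := hRb _ (by omega)
        have hb3 : ‖b s ((i : ℕ) + 1)‖ ≤ R := hRb _ (by omega)
        have step1 : ‖toyRHS (b s) (i : ℕ)‖ ≤
            ‖b s (i : ℕ)‖ ^ 3 + 2 * ‖b s (i : ℕ)‖ *
              (‖b s ((i : ℕ) - 1)‖ ^ 2 + ‖b s ((i : ℕ) + 1)‖ ^ 2) := by
          unfold toyRHS
          refine (norm_add_le _ _).trans (add_le_add ?_ ?_)
          · simp only [norm_mul, norm_neg, Complex.norm_I, one_mul, norm_pow,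
              RCLike.norm_conj]
            exact le_of_eq (by ring)
          · have e2 : ‖(2 : ℂ) * Complex.I * (starRingEnd ℂ) (b s (i : ℕ)) *
                ((b s ((i : ℕ) - 1)) ^ 2 + (b s ((i : ℕ) + 1)) ^ 2)‖
                = 2 * ‖b s (i : ℕ)‖ *
                  ‖(b s ((i : ℕ) - 1)) ^ 2 + (b s ((i : ℕ) + 1)) ^ 2‖ := by
              simp [norm_mul, Complex.norm_I, RCLike.norm_conj]
            rw [e2]
            have e3 : ‖(b s ((i : ℕ) - 1)) ^ 2 + (b s ((i : ℕ) + 1)) ^ 2‖ ≤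
                ‖b s ((i : ℕ) - 1)‖ ^ 2 + ‖b s ((i : ℕ) + 1)‖ ^ 2 := by
              refine (norm_add_le _ _).trans ?_
              simp [norm_pow]
            have h2z : (0 : ℝ) ≤ 2 * ‖b s (i : ℕ)‖ := by positivity
            exact mul_le_mul_of_nonneg_left e3 h2z
        calc ‖toyRHS (b s) (i : ℕ)‖
            ≤ ‖b s (i : ℕ)‖ ^ 3 + 2 * ‖b s (i : ℕ)‖ *
              (‖b s ((i : ℕ) - 1)‖ ^ 2 + ‖b s ((i : ℕ) + 1)‖ ^ 2) := step1
          _ ≤ 5 * R ^ 2 * ‖b s (i : ℕ)‖ := by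
              have hx2 : ‖b s (i : ℕ)‖ * ‖b s (i : ℕ)‖ ≤ R * R :=
                mul_le_mul hb1 hb1 (norm_nonneg _) hR0
              have hy2 : ‖b s ((i : ℕ) - 1)‖ * ‖b s ((i : ℕ) - 1)‖ ≤ R * R :=
                mul_le_mul hb2 hb2 (norm_nonneg _) hR0
              have hz2 : ‖b s ((i : ℕ) + 1)‖ * ‖b s ((i : ℕ) + 1)‖ ≤ R * R :=
                mul_le_mul hb3 hb3 (norm_nonneg _) hR0
              nlinarith [mul_le_mul_of_nonneg_right hx2 (norm_nonneg (b s (i : ℕ))),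
                mul_le_mul_of_nonneg_left hy2 (norm_nonneg (b s (i : ℕ))),
                mul_le_mul_of_nonneg_left hz2 (norm_nonneg (b s (i : ℕ)))]
          _ ≤ 5 * R ^ 2 * ‖F s‖ := by
              have : (0 : ℝ) ≤ 5 * R ^ 2 := by positivity
              exact mul_le_mul_of_nonneg_left hFle this
    have hF0 : F t₀ = 0 := by
      funext i
      by_cases hij : (i : ℕ) = j ∨ (i : ℕ) = j + 1
      · simp [hFdef, hij]
      · push_neg at hij
        simp [hFdef, hij.1, hij.2, hzero i hij.1 hij.2]
    have hall := aux_zero_of_deriv_bound ht₀m hder hbound hF0 t htm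
    have := congrFun hall ⟨k, by omega⟩
    simpa [hFdef, hk1, hk2] using this
  refine ⟨part1, fun t ht => ?_⟩
  have hjm : b t (j - 1) = 0 := part1 t ht (j - 1) (by omega) (by omega)
  have hjp : b t (j + 2) = 0 := part1 t ht (j + 2) (by omega) (by omega)
  constructor
  · have h := hbd t ht j hj1 hjN
    have e : toyRHS (b t) j =
        -Complex.I * (b t j) ^ 2 * (starRingEnd ℂ) (b t j)
          + 2 * Complex.I * (starRingEnd ℂ) (b t j) * (b t (j + 1)) ^ 2 := by
      rw [toyRHS, hjm]; ring
    exact e ▸ h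
  · have h := hbd t ht (j + 1) (by omega) hj2
    have e : toyRHS (b t) (j + 1) =
        -Complex.I * (b t (j + 1)) ^ 2 * (starRingEnd ℂ) (b t (j + 1))
          + 2 * Complex.I * (starRingEnd ℂ) (b t (j + 1)) * (b t j) ^ 2 := by
      rw [toyRHS, Nat.add_sub_cancel]
      have e2 : j + 1 + 1 = j + 2 := rfl
      rw [e2, hjp]; ring
    exact e ▸ h

end
end

section
/- Let Λ ⊂ ℤ² be a finite set satisfying condition (1_Λ), and let β : I → ℓ¹(ℤ²;ℂ) be continuous in ℓ¹, coordinatewise C¹, and solve −i (d/dt) β_n = −β_n |β_n|² + Σ_{(n₁,n₂,n₃)∈A(n)} β_{n₁} conj(β_{n₂}) β_{n₃} for all n ∈ ℤ², with 0 ∈ I. If β_n(0) = 0 for every n ∉ Λ, then β_n(t) = 0 for every n ∉ Λ and every t ∈ I. If moreover Λ = Λ₁ ∪ … ∪ Λ_N satisfies conditions (2_Λ)–(5_Λ), then for every n ∈ Λ one has −i (d/dt) β_n = −β_n |β_n|² + 2 β_{n_child₁} β_{n_child₂} conj(β_{n_spouse}) + 2 β_{n_parent₁} β_{n_parent₂}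 conj(β_{n_sibling}), where the children terms are absent for n ∈ Λ_N and the parent terms are absent for n ∈ Λ₁. -/
/-! STATEMENT 12: invariance of the support Λ for the gauged resonant system, and the reduced finite system on Λ. -/

noncomputable section

open Complex

/-- a finite set `Λ ⊂ ℤ²` satisfies the closure condition `1_Λ` -/
def ClosedSet (Λ : Finset Z2) : Prop :=
  ∀ n₁ n₂ n₃ n : Z2, n₁ ∈ Λ → n₂ ∈ Λ → n₃ ∈ Λ → memA n₁ n₂ n₃ n → n ∈ Λ

open scoped Classical in
/-- the `A(n)`-restricted cubic sum -/
def resSum (g : Z2 → ℂ) (n : Z2) : ℂ :=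
  ∑' p : Z2 × Z2 × Z2,
    if memA p.1 p.2.1 p.2.2 n then
      g p.1 * (starRingEnd ℂ) (g p.2.1) * g p.2.2
    else 0

open MeasureTheory Set
open scoped ENNReal NNReal

namespace S12

open scoped Classical in
def rf (g : Z2 → ℂ) (n : Z2) (p : Z2 × Z2 × Z2) : ℂ :=
  if memA p.1 p.2.1 p.2.2 n then g p.1 * (starRingEnd ℂ) (g p.2.1) * g p.2.2 else 0

lemma resSum_eq (g : Z2 → ℂ) (n : Z2) : resSum g n = ∑' p, rf g n p := rfl

lemma summable_triple {a b c : Z2 → ℝ} (ha : Summable a) (hb : Summable b) (hc : Summable c)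
    (ha0 : ∀ n, 0 ≤ a n) (hb0 : ∀ n, 0 ≤ b n) (hc0 : ∀ n, 0 ≤ c n) :
    Summable (fun p : Z2 × Z2 × Z2 => a p.1 * b p.2.1 * c p.2.2) := by
  have h := ha.mul_of_nonneg (hb.mul_of_nonneg hc hb0 hc0) ha0
    (fun p => mul_nonneg (hb0 _) (hc0 _))
  simpa [mul_assoc] using h

lemma tsum_triple_mul {a b c : Z2 → ℝ} (ha : Summable a) (hb : Summable b) (hc : Summable c)
    (ha0 : ∀ n, 0 ≤ a n) (hb0 : ∀ n, 0 ≤ b n) (hc0 : ∀ n, 0 ≤ c n) :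
    ∑' p : Z2 × Z2 × Z2, a p.1 * b p.2.1 * c p.2.2
      = (∑' m, a m) * (∑' m, b m) * (∑' m, c m) := by
  have hbc : Summable (fun q : Z2 × Z2 => b q.1 * c q.2) :=
    hb.mul_of_nonneg hc hb0 hc0
  have habc := summable_triple ha hb hc ha0 hb0 hc0
  rw [Summable.tsum_prod habc]
  have hinner : ∀ x : Z2, ∑' q : Z2 × Z2, a x * b q.1 * c q.2
      = a x * ((∑' m, b m) * (∑' m, c m)) := by
    intro x
    have : ∀ q : Z2 × Z2, a x * b q.1 * c q.2 = a x * (b q.1 * c q.2) := by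
      intro q; ring
    rw [tsum_congr this, tsum_mul_left, Summable.tsum_prod hbc]
    congr 1
    calc ∑' (u : Z2) (v : Z2), b u * c v = ∑' u : Z2, b u * ∑' v, c v := by
          exact tsum_congr fun u => tsum_mul_left
      _ = (∑' m, b m) * (∑' m, c m) := tsum_mul_right
  calc ∑' (x : Z2) (q : Z2 × Z2), a x * b q.1 * c q.2
      = ∑' x : Z2, a x * ((∑' m, b m) * (∑' m, c m)) := tsum_congr hinner
    _ = (∑' m, a m) * ((∑' m, b m) * (∑' m, c m)) := tsum_mul_right
    _ = _ := by ring

lemma norm_rf_le (g : Z2 → ℂ) (n : Z2) (p : Z2 × Z2 × Z2) :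
    ‖rf g n p‖ ≤ ‖g p.1‖ * ‖g p.2.1‖ * ‖g p.2.2‖ := by
  unfold rf
  split_ifs
  · exact le_of_eq (by simp [norm_mul, RCLike.norm_conj])
  · simp only [norm_zero]
    positivity

lemma summable_norm_rf {g : Z2 → ℂ} (hg : Summable fun m => ‖g m‖) (n : Z2) :
    Summable fun p => ‖rf g n p‖ := by
  have H := summable_triple hg hg hg (fun _ => norm_nonneg _) (fun _ => norm_nonneg _)
      (fun _ => norm_nonneg _)
  exact Summable.of_nonneg_of_le (fun _ => norm_nonneg _) (norm_rf_le g n) H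

lemma summable_rf {g : Z2 → ℂ} (hg : Summable fun m => ‖g m‖) (n : Z2) :
    Summable (rf g n) :=
  (summable_norm_rf hg n).of_norm

lemma resSum_sub_bound {g h : Z2 → ℂ} (hg : Summable fun m => ‖g m‖)
    (hh : Summable fun m => ‖h m‖) (n : Z2) :
    ‖resSum g n - resSum h n‖ ≤
      (∑' m, ‖g m - h m‖) * (∑' m, ‖g m‖) * (∑' m, ‖g m‖)
      + (∑' m, ‖h m‖) * (∑' m, ‖g m - h m‖) * (∑' m, ‖g m‖)
      + (∑' m, ‖h m‖) * (∑' m, ‖h m‖) * (∑' m, ‖g m - h m‖) := by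
  have hd : Summable fun m => ‖g m - h m‖ :=
    Summable.of_nonneg_of_le (fun _ => norm_nonneg _) (fun m => norm_sub_le _ _) (hg.add hh)
  have hgn0 : ∀ m : Z2, (0:ℝ) ≤ ‖g m‖ := fun _ => norm_nonneg _
  have hhn0 : ∀ m : Z2, (0:ℝ) ≤ ‖h m‖ := fun _ => norm_nonneg _
  have hdn0 : ∀ m : Z2, (0:ℝ) ≤ ‖g m - h m‖ := fun _ => norm_nonneg _
  -- pointwise bound
  have hpt : ∀ p : Z2 × Z2 × Z2, ‖rf g n p - rf h n p‖ ≤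
      ‖g p.1 - h p.1‖ * ‖g p.2.1‖ * ‖g p.2.2‖
      + ‖h p.1‖ * ‖g p.2.1 - h p.2.1‖ * ‖g p.2.2‖
      + ‖h p.1‖ * ‖h p.2.1‖ * ‖g p.2.2 - h p.2.2‖ := by
    intro p
    unfold rf
    split_ifs with hA
    · have hdecomp : g p.1 * (starRingEnd ℂ) (g p.2.1) * g p.2.2
          - h p.1 * (starRingEnd ℂ) (h p.2.1) * h p.2.2
          = (g p.1 - h p.1) * (starRingEnd ℂ) (g p.2.1) * g p.2.2
            + h p.1 * (starRingEnd ℂ) (g p.2.1 - h p.2.1) * g p.2.2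
            + h p.1 * (starRingEnd ℂ) (h p.2.1) * (g p.2.2 - h p.2.2) := by
        simp only [map_sub]; ring
      rw [hdecomp]
      refine (norm_add₃_le).trans (le_of_eq ?_)
      simp [norm_mul, ← map_sub, RCLike.norm_conj]
    · simp only [sub_zero, sub_self, norm_zero]
      positivity
  have hS1 := summable_triple hd hg hg hdn0 hgn0 hgn0
  have hS2 := summable_triple hh hd hg hhn0 hdn0 hgn0
  have hS3 := summable_triple hh hh hd hhn0 hhn0 hdn0
  have hSsum : Summable fun p : Z2 × Z2 × Z2 =>
      ‖g p.1 - h p.1‖ * ‖g p.2.1‖ * ‖g p.2.2‖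
      + ‖h p.1‖ * ‖g p.2.1 - h p.2.1‖ * ‖g p.2.2‖
      + ‖h p.1‖ * ‖h p.2.1‖ * ‖g p.2.2 - h p.2.2‖ := (hS1.add hS2).add hS3
  have hdiff : resSum g n - resSum h n = ∑' p, (rf g n p - rf h n p) := by
    rw [resSum_eq, resSum_eq]
    exact (Summable.tsum_sub (summable_rf hg n) (summable_rf hh n)).symm
  rw [hdiff]
  have hnormsum : Summable fun p => ‖rf g n p - rf h n p‖ :=
    Summable.of_nonneg_of_le (fun _ => norm_nonneg _) hpt hSsum
  refine (norm_tsum_le_tsum_norm hnormsum).trans ?_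
  refine (Summable.tsum_le_tsum hpt hnormsum hSsum).trans ?_
  rw [Summable.tsum_add (hS1.add hS2) hS3, Summable.tsum_add hS1 hS2]
  rw [tsum_triple_mul hd hg hg hdn0 hgn0 hgn0,
      tsum_triple_mul hh hd hg hhn0 hdn0 hgn0,
      tsum_triple_mul hh hh hd hhn0 hhn0 hdn0]


lemma etsum_triple (a b c : Z2 → ℝ≥0∞) :
    ∑' p : Z2 × Z2 × Z2, a p.1 * b p.2.1 * c p.2.2
      = (∑' m, a m) * (∑' m, b m) * (∑' m, c m) := by
  rw [ENNReal.tsum_prod']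
  have hinner : ∀ x : Z2, ∑' q : Z2 × Z2, a x * b q.1 * c q.2
      = a x * ((∑' m, b m) * (∑' m, c m)) := by
    intro x
    have h1 : ∀ q : Z2 × Z2, a x * b q.1 * c q.2 = a x * (b q.1 * c q.2) := fun q => mul_assoc _ _ _
    rw [tsum_congr h1, ENNReal.tsum_mul_left, ENNReal.tsum_prod']
    congr 1
    calc ∑' (u : Z2) (v : Z2), b u * c v = ∑' u : Z2, b u * ∑' v, c v := by
          exact tsum_congr fun u => ENNReal.tsum_mul_left
      _ = (∑' m, b m) * (∑' m, c m) := ENNReal.tsum_mul_right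
  calc ∑' (x : Z2) (q : Z2 × Z2), a x * b q.1 * c q.2
      = ∑' x : Z2, a x * ((∑' m, b m) * (∑' m, c m)) := tsum_congr hinner
    _ = (∑' m, a m) * ((∑' m, b m) * (∑' m, c m)) := ENNReal.tsum_mul_right
    _ = _ := by ring


lemma key (Λ : Finset Z2) (hΛ : ClosedSet Λ)
    (I : Set ℝ) (hI : I.OrdConnected) (h0 : (0:ℝ) ∈ I)
    (c : ℂ) (hc : ‖c‖ = 1)
    (β : ℝ → Z2 → ℂ)
    (hl1 : ∀ t ∈ I, Summable (fun n : Z2 => ‖β t n‖))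
    (hcont : ∀ t₀ ∈ I, ∀ ε : ℝ, 0 < ε → ∃ η : ℝ, 0 < η ∧
      ∀ t ∈ I, |t - t₀| < η → (∑' n : Z2, ‖β t n - β t₀ n‖) < ε)
    (hode : ∀ t ∈ I, ∀ n : Z2, HasDerivAt (fun s => β s n)
        (c * (-(β t n) * (‖β t n‖ : ℂ) ^ 2 + resSum (β t) n)) t)
    (hsupp : ∀ n : Z2, n ∉ Λ → β 0 n = 0) :
    ∀ T ∈ I, 0 ≤ T → ∀ n ∉ Λ, β T n = 0 := by
  classical
  intro T hTI hT0
  have hIcc : Icc (0:ℝ) T ⊆ I := hI.out h0 hTI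
  set Nf : ℝ → ℝ := fun s => ∑' m, ‖β s m‖ with hNf
  set μf : ℝ → ℝ := fun s => ∑' m : Z2, if m ∈ Λ then 0 else ‖β s m‖ with hμf
  have hμsummand : ∀ s ∈ I, Summable fun m : Z2 => if m ∈ Λ then 0 else ‖β s m‖ := by
    intro s hs
    refine Summable.of_nonneg_of_le (fun m => ?_) (fun m => ?_) (hl1 s hs)
    · split_ifs <;> positivity
    · split_ifs with h
      · positivity
      · exact le_rfl
  have hμ0 : ∀ s, 0 ≤ μf s := fun s => tsum_nonneg (fun m => by split_ifs <;> positivity)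
  -- difference bounds
  have hdiff_le : ∀ t ∈ I, ∀ t₀ ∈ I,
      |Nf t - Nf t₀| ≤ (∑' m, ‖β t m - β t₀ m‖) ∧
      |μf t - μf t₀| ≤ (∑' m, ‖β t m - β t₀ m‖) := by
    intro t ht t₀ ht₀
    have hsub : Summable fun m : Z2 => ‖β t m - β t₀ m‖ :=
      Summable.of_nonneg_of_le (fun _ => norm_nonneg _) (fun m => norm_sub_le _ _)
        ((hl1 t ht).add (hl1 t₀ ht₀))
    constructor
    · have h1 : Nf t - Nf t₀ = ∑' m : Z2, (‖β t m‖ - ‖β t₀ m‖) :=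
        (Summable.tsum_sub (hl1 t ht) (hl1 t₀ ht₀)).symm
      rw [h1]
      have h2 : Summable fun m : Z2 => |‖β t m‖ - ‖β t₀ m‖| := by
        refine Summable.of_nonneg_of_le (fun m => abs_nonneg _)
          (fun m => abs_norm_sub_norm_le _ _) hsub
      calc |∑' m : Z2, (‖β t m‖ - ‖β t₀ m‖)| ≤ ∑' m : Z2, |‖β t m‖ - ‖β t₀ m‖| := by
            simpa [Real.norm_eq_abs] using
              norm_tsum_le_tsum_norm (f := fun m : Z2 => ‖β t m‖ - ‖β t₀ m‖) (by simpa [Real.norm_eq_abs] using h2)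
        _ ≤ ∑' m, ‖β t m - β t₀ m‖ :=
            Summable.tsum_le_tsum (fun m => abs_norm_sub_norm_le _ _) h2 hsub
    · have h1 : μf t - μf t₀ = ∑' m : Z2,
          ((if m ∈ Λ then 0 else ‖β t m‖) - (if m ∈ Λ then 0 else ‖β t₀ m‖)) :=
        (Summable.tsum_sub (hμsummand t ht) (hμsummand t₀ ht₀)).symm
      rw [h1]
      have hpt : ∀ m : Z2, |(if m ∈ Λ then 0 else ‖β t m‖) - (if m ∈ Λ then 0 else ‖β t₀ m‖)|
          ≤ ‖β t m - β t₀ m‖ := by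
        intro m
        split_ifs with h
        · simpa using norm_nonneg _
        · exact abs_norm_sub_norm_le _ _
      have h2 : Summable fun m : Z2 =>
          |(if m ∈ Λ then 0 else ‖β t m‖) - (if m ∈ Λ then 0 else ‖β t₀ m‖)| :=
        Summable.of_nonneg_of_le (fun m => abs_nonneg _) hpt hsub
      calc |∑' m : Z2, ((if m ∈ Λ then 0 else ‖β t m‖) - (if m ∈ Λ then 0 else ‖β t₀ m‖))|
          ≤ ∑' m : Z2, |(if m ∈ Λ then 0 else ‖β t m‖) - (if m ∈ Λ then 0 else ‖β t₀ m‖)| := by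
            simpa [Real.norm_eq_abs] using
              norm_tsum_le_tsum_norm (f := fun m : Z2 =>
                (if m ∈ Λ then 0 else ‖β t m‖) - (if m ∈ Λ then 0 else ‖β t₀ m‖))
                (by simpa [Real.norm_eq_abs] using h2)
        _ ≤ ∑' m, ‖β t m - β t₀ m‖ := Summable.tsum_le_tsum hpt h2 hsub
  have hNcont : ContinuousOn Nf I := by
    intro t₀ ht₀
    rw [Metric.continuousWithinAt_iff]
    intro ε hε
    obtain ⟨η, hη, hB⟩ := hcont t₀ ht₀ ε hε
    refine ⟨η, hη, fun t ht hd => ?_⟩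
    have h := hB t ht (by rwa [Real.dist_eq] at hd)
    rw [Real.dist_eq]
    exact lt_of_le_of_lt (hdiff_le t ht t₀ ht₀).1 h
  have hμcont : ContinuousOn μf I := by
    intro t₀ ht₀
    rw [Metric.continuousWithinAt_iff]
    intro ε hε
    obtain ⟨η, hη, hB⟩ := hcont t₀ ht₀ ε hε
    refine ⟨η, hη, fun t ht hd => ?_⟩
    have h := hB t ht (by rwa [Real.dist_eq] at hd)
    rw [Real.dist_eq]
    exact lt_of_le_of_lt (hdiff_le t ht t₀ ht₀).2 h
  have hβcont : ∀ n : Z2, ContinuousOn (fun s => β s n) I :=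
    fun n t ht => ((hode t ht n).continuousAt).continuousWithinAt
  have hRcont : ∀ n : Z2, ContinuousOn (fun s => resSum (β s) n) I := by
    intro n t₀ ht₀
    rw [Metric.continuousWithinAt_iff]
    intro ε hε
    have hG0 : 0 ≤ Nf t₀ := tsum_nonneg fun m => norm_nonneg _
    have hden : (0:ℝ) < 3 * (Nf t₀ + 1)^2 + 1 := by positivity
    obtain ⟨η, hη, hB⟩ := hcont t₀ ht₀ (min 1 (ε / (3*(Nf t₀ + 1)^2 + 1)))
      (lt_min one_pos (by positivity))
    refine ⟨η, hη, fun t ht hd => ?_⟩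
    have hdlt := hB t ht (by rwa [Real.dist_eq] at hd)
    have hd0 : 0 ≤ ∑' m, ‖β t m - β t₀ m‖ := tsum_nonneg fun m => norm_nonneg _
    have hd1 : (∑' m, ‖β t m - β t₀ m‖) ≤ 1 := le_of_lt (lt_of_lt_of_le hdlt (min_le_left _ _))
    have hdε : (∑' m, ‖β t m - β t₀ m‖) < ε / (3*(Nf t₀+1)^2+1) :=
      lt_of_lt_of_le hdlt (min_le_right _ _)
    have hdD : (∑' m, ‖β t m - β t₀ m‖) * (3*(Nf t₀+1)^2+1) < ε := by
      rwa [← lt_div_iff₀ hden]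
    have hsub : Summable fun m : Z2 => ‖β t m - β t₀ m‖ :=
      Summable.of_nonneg_of_le (fun _ => norm_nonneg _) (fun m => norm_sub_le _ _)
        ((hl1 t ht).add (hl1 t₀ ht₀))
    have hNt0 : 0 ≤ Nf t := tsum_nonneg fun m => norm_nonneg _
    have hNt : Nf t ≤ Nf t₀ + ∑' m, ‖β t m - β t₀ m‖ := by
      have hle : ∀ m : Z2, ‖β t m‖ ≤ ‖β t₀ m‖ + ‖β t m - β t₀ m‖ := by
        intro m
        calc ‖β t m‖ = ‖β t₀ m + (β t m - β t₀ m)‖ := by ring_nf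
          _ ≤ ‖β t₀ m‖ + ‖β t m - β t₀ m‖ := norm_add_le _ _
      calc Nf t ≤ ∑' m : Z2, (‖β t₀ m‖ + ‖β t m - β t₀ m‖) :=
            Summable.tsum_le_tsum hle (hl1 t ht) ((hl1 t₀ ht₀).add hsub)
        _ = Nf t₀ + ∑' m, ‖β t m - β t₀ m‖ := Summable.tsum_add (hl1 t₀ ht₀) hsub
    have hNt1 : Nf t ≤ Nf t₀ + 1 := hNt.trans (by linarith)
    have hb := resSum_sub_bound (hl1 t ht) (hl1 t₀ ht₀) n
    calc dist (resSum (β t) n) (resSum (β t₀) n)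
        = ‖resSum (β t) n - resSum (β t₀) n‖ := dist_eq_norm _ _
      _ ≤ (∑' m, ‖β t m - β t₀ m‖) * Nf t * Nf t
          + Nf t₀ * (∑' m, ‖β t m - β t₀ m‖) * Nf t
          + Nf t₀ * Nf t₀ * (∑' m, ‖β t m - β t₀ m‖) := hb
      _ ≤ (∑' m, ‖β t m - β t₀ m‖) * (Nf t₀+1) * (Nf t₀+1)
          + Nf t₀ * (∑' m, ‖β t m - β t₀ m‖) * (Nf t₀+1)
          + Nf t₀ * Nf t₀ * (∑' m, ‖β t m - β t₀ m‖) := by gcongr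
      _ ≤ (∑' m, ‖β t m - β t₀ m‖) * (3*(Nf t₀+1)^2+1) := by nlinarith [hd0, hG0]
      _ < ε := hdD
  set F : Z2 → ℝ → ℂ := fun n s => c * (-(β s n) * (‖β s n‖:ℂ)^2 + resSum (β s) n) with hF
  have hFcont : ∀ n, ContinuousOn (F n) I := by
    intro n
    apply ContinuousOn.mul continuousOn_const
    apply ContinuousOn.add
    · exact (hβcont n).neg.mul ((Complex.continuous_ofReal.comp_continuousOn (hβcont n).norm).pow 2)
    · exact hRcont n
  obtain ⟨B0, hB0⟩ := (isCompact_Icc : IsCompact (Icc (0:ℝ) T)).exists_bound_of_continuousOn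
    (hNcont.mono hIcc)
  have hBB : ∀ s ∈ Icc (0:ℝ) T, Nf s ≤ B0 := fun s hs => (le_abs_self _).trans
    (by simpa [Real.norm_eq_abs] using hB0 s hs)
  have hB0n : 0 ≤ B0 := le_trans (tsum_nonneg fun m => norm_nonneg _) (hBB 0 ⟨le_rfl, hT0⟩)
  set K : ℝ := 4 * B0^2 + 1 with hK
  have hK0 : (0:ℝ) < K := by positivity
  -- FTC
  have hFTC : ∀ u ∈ Icc (0:ℝ) T, ∀ n ∉ Λ, β u n = ∫ s in (0:ℝ)..u, F n s := by
    intro u hu n hn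
    have huI : Icc (0:ℝ) u ⊆ I := fun x hx => hIcc ⟨hx.1, hx.2.trans hu.2⟩
    have hder : ∀ s ∈ uIcc (0:ℝ) u, HasDerivAt (fun r => β r n) (F n s) s := by
      intro s hs
      rw [uIcc_of_le hu.1] at hs
      exact hode s (huI hs) n
    have hint : IntervalIntegrable (F n) volume 0 u := by
      apply ContinuousOn.intervalIntegrable
      rw [uIcc_of_le hu.1]
      exact (hFcont n).mono huI
    have h := intervalIntegral.integral_eq_sub_of_hasDerivAt hder hint
    rw [h, hsupp n hn, sub_zero]
  -- ofReal description of μf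
  have hEμ : ∀ s ∈ I, ENNReal.ofReal (μf s)
      = ∑' n : Z2, (if n ∈ Λ then 0 else (‖β s n‖₊ : ℝ≥0∞)) := by
    intro s hs
    rw [hμf]
    rw [ENNReal.ofReal_tsum_of_nonneg (fun m => by split_ifs <;> positivity) (hμsummand s hs)]
    refine tsum_congr fun m => ?_
    by_cases hm : m ∈ Λ
    · simp [hm]
    · simp only [hm, if_false]
      exact (ofReal_norm _).trans (enorm_eq_nnnorm _)
  -- core pointwise estimate
  have hcore : ∀ s ∈ Icc (0:ℝ) T,
      (∑' n : Z2, if n ∈ Λ then 0 else (‖F n s‖₊ : ℝ≥0∞))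
        ≤ ENNReal.ofReal K * ENNReal.ofReal (μf s) := by
    intro s hs
    have hsI : s ∈ I := hIcc hs
    have hsum := hl1 s hsI
    have hSofReal : (∑' m : Z2, (‖β s m‖₊ : ℝ≥0∞)) = ENNReal.ofReal (Nf s) := by
      rw [hNf, ENNReal.ofReal_tsum_of_nonneg (fun m => norm_nonneg _) hsum]
      exact tsum_congr fun m => ((ofReal_norm _).trans (enorm_eq_nnnorm _)).symm
    set S : ℝ≥0∞ := ∑' m : Z2, (‖β s m‖₊ : ℝ≥0∞) with hS
    set χ : Z2 → ℝ≥0∞ := fun m => if m ∈ Λ then 0 else 1 with hχ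
    set Em : ℝ≥0∞ := ∑' m : Z2, χ m * (‖β s m‖₊ : ℝ≥0∞) with hEm
    have hSB : S ≤ ENNReal.ofReal B0 := by
      rw [hSofReal]; exact ENNReal.ofReal_le_ofReal (hBB s hs)
    have hEmeq : Em = ENNReal.ofReal (μf s) := by
      rw [hEm, hEμ s hsI]
      refine tsum_congr fun m => ?_
      by_cases hm : m ∈ Λ <;> simp [hχ, hm]
    have hstep1 : ∀ n ∉ Λ, (‖F n s‖₊ : ℝ≥0∞) ≤ (‖β s n‖₊ : ℝ≥0∞) ^ 3 +
        ∑' p : Z2 × Z2 × Z2, (if memA p.1 p.2.1 p.2.2 n then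
          (‖β s p.1‖₊ : ℝ≥0∞) * (‖β s p.2.1‖₊ : ℝ≥0∞) * (‖β s p.2.2‖₊ : ℝ≥0∞) else 0) := by
      intro n _
      have h1 : ‖F n s‖ ≤ ‖β s n‖^3 + ‖resSum (β s) n‖ := by
        rw [hF]
        simp only []
        calc ‖c * (-(β s n) * (‖β s n‖:ℂ)^2 + resSum (β s) n)‖
            = ‖-(β s n) * (‖β s n‖:ℂ)^2 + resSum (β s) n‖ := by rw [norm_mul, hc, one_mul]
          _ ≤ ‖-(β s n) * (‖β s n‖:ℂ)^2‖ + ‖resSum (β s) n‖ := norm_add_le _ _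
          _ = ‖β s n‖^3 + ‖resSum (β s) n‖ := by
              congr 1
              rw [norm_mul, norm_neg, norm_pow, Complex.norm_real, Real.norm_eq_abs,
                abs_norm]
              ring
      have h2 : ‖resSum (β s) n‖ ≤ ∑' p, ‖rf (β s) n p‖ := by
        rw [resSum_eq]
        exact norm_tsum_le_tsum_norm (summable_norm_rf hsum n)
      calc (‖F n s‖₊ : ℝ≥0∞) = ENNReal.ofReal ‖F n s‖ := ((ofReal_norm _).trans (enorm_eq_nnnorm _)).symm
        _ ≤ ENNReal.ofReal (‖β s n‖^3 + ‖resSum (β s) n‖) := ENNReal.ofReal_le_ofReal h1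
        _ ≤ ENNReal.ofReal (‖β s n‖^3) + ENNReal.ofReal ‖resSum (β s) n‖ :=
            ENNReal.ofReal_add_le
        _ ≤ (‖β s n‖₊ : ℝ≥0∞) ^ 3 + ∑' p : Z2 × Z2 × Z2, (if memA p.1 p.2.1 p.2.2 n then
              (‖β s p.1‖₊ : ℝ≥0∞) * (‖β s p.2.1‖₊ : ℝ≥0∞) * (‖β s p.2.2‖₊ : ℝ≥0∞) else 0) := by
            refine add_le_add ?_ ?_
            · rw [ENNReal.ofReal_pow (norm_nonneg _), ofReal_norm, enorm_eq_nnnorm]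
            · refine (ENNReal.ofReal_le_ofReal h2).trans ?_
              rw [ENNReal.ofReal_tsum_of_nonneg (fun p => norm_nonneg _) (summable_norm_rf hsum n)]
              refine ENNReal.tsum_le_tsum fun p => ?_
              unfold rf
              split_ifs with hp
              · refine le_of_eq ?_
                rw [norm_mul, norm_mul, RCLike.norm_conj,
                  ENNReal.ofReal_mul (by positivity), ENNReal.ofReal_mul (norm_nonneg _),
                  ofReal_norm, ofReal_norm, ofReal_norm, enorm_eq_nnnorm, enorm_eq_nnnorm, enorm_eq_nnnorm]
              · simp
    have hW : ∀ n : Z2, n ∉ Λ →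
        (∑' p : Z2 × Z2 × Z2, (if memA p.1 p.2.1 p.2.2 n then
          (‖β s p.1‖₊ : ℝ≥0∞) * (‖β s p.2.1‖₊ : ℝ≥0∞) * (‖β s p.2.2‖₊ : ℝ≥0∞) else 0))
        ≤ ∑' p : Z2 × Z2 × Z2, (if n = p.1 - p.2.1 + p.2.2 then
            (χ p.1 + χ p.2.1 + χ p.2.2) *
              ((‖β s p.1‖₊ : ℝ≥0∞) * (‖β s p.2.1‖₊ : ℝ≥0∞) * (‖β s p.2.2‖₊ : ℝ≥0∞)) else 0) := by
      intro n hn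
      refine ENNReal.tsum_le_tsum fun p => ?_
      by_cases hp : memA p.1 p.2.1 p.2.2 n
      · have hlin : n = p.1 - p.2.1 + p.2.2 := hp.1.symm
        rw [if_pos hp, if_pos hlin]
        have hone : (1:ℝ≥0∞) ≤ χ p.1 + χ p.2.1 + χ p.2.2 := by
          by_cases h1 : p.1 ∈ Λ
          · by_cases h2 : p.2.1 ∈ Λ
            · by_cases h3 : p.2.2 ∈ Λ
              · exact absurd (hΛ _ _ _ _ h1 h2 h3 hp) hn
              · have : χ p.2.2 = 1 := by rw [hχ]; simp [h3]
                calc (1:ℝ≥0∞) = χ p.2.2 := this.symm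
                  _ ≤ χ p.1 + χ p.2.1 + χ p.2.2 := le_add_self
            · have : χ p.2.1 = 1 := by rw [hχ]; simp [h2]
              calc (1:ℝ≥0∞) = χ p.2.1 := this.symm
                _ ≤ χ p.1 + χ p.2.1 + χ p.2.2 := by
                  exact le_add_of_le_of_nonneg (le_add_self) zero_le
          · have : χ p.1 = 1 := by rw [hχ]; simp [h1]
            calc (1:ℝ≥0∞) = χ p.1 := this.symm
              _ ≤ χ p.1 + χ p.2.1 + χ p.2.2 := by
                exact le_add_of_le_of_nonneg (le_add_of_le_of_nonneg le_rfl zero_le) zero_le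
        calc (‖β s p.1‖₊:ℝ≥0∞) * (‖β s p.2.1‖₊:ℝ≥0∞) * (‖β s p.2.2‖₊:ℝ≥0∞)
            = 1 * ((‖β s p.1‖₊:ℝ≥0∞) * (‖β s p.2.1‖₊:ℝ≥0∞) * (‖β s p.2.2‖₊:ℝ≥0∞)) :=
              (one_mul _).symm
          _ ≤ _ := mul_le_mul_left hone _
      · rw [if_neg hp]
        exact zero_le
    calc (∑' n : Z2, if n ∈ Λ then 0 else (‖F n s‖₊ : ℝ≥0∞))
        ≤ ∑' n : Z2, (χ n * (‖β s n‖₊:ℝ≥0∞) ^ 3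
            + ∑' p : Z2 × Z2 × Z2, (if n = p.1 - p.2.1 + p.2.2 then
              (χ p.1 + χ p.2.1 + χ p.2.2) *
                ((‖β s p.1‖₊ : ℝ≥0∞) * (‖β s p.2.1‖₊ : ℝ≥0∞) * (‖β s p.2.2‖₊ : ℝ≥0∞)) else 0)) := by
          refine ENNReal.tsum_le_tsum fun n => ?_
          by_cases hn : n ∈ Λ
          · simp [hn]
          · have := (hstep1 n hn).trans (add_le_add_right (hW n hn) _)
            simp only [hn, if_false]
            refine this.trans (le_of_eq ?_)
            congr 1
            rw [hχ]; simp [hn]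
      _ = (∑' n : Z2, χ n * (‖β s n‖₊:ℝ≥0∞) ^ 3)
          + ∑' n : Z2, ∑' p : Z2 × Z2 × Z2, (if n = p.1 - p.2.1 + p.2.2 then
              (χ p.1 + χ p.2.1 + χ p.2.2) *
                ((‖β s p.1‖₊ : ℝ≥0∞) * (‖β s p.2.1‖₊ : ℝ≥0∞) * (‖β s p.2.2‖₊ : ℝ≥0∞)) else 0) :=
          ENNReal.tsum_add
      _ ≤ S * S * Em + 3 * (S * S * Em) := by
          refine add_le_add ?_ ?_
          · refine (ENNReal.tsum_le_tsum (fun n => ?_)).trans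
              (le_of_eq (ENNReal.tsum_mul_left (a := S * S) (f := fun n => χ n * (‖β s n‖₊:ℝ≥0∞))))
            have hb1 : (‖β s n‖₊:ℝ≥0∞) ≤ S := ENNReal.le_tsum n
            calc χ n * (‖β s n‖₊:ℝ≥0∞) ^ 3
                = (‖β s n‖₊:ℝ≥0∞) * (‖β s n‖₊:ℝ≥0∞) * (χ n * (‖β s n‖₊:ℝ≥0∞)) := by ring
              _ ≤ S * S * (χ n * (‖β s n‖₊:ℝ≥0∞)) := by
                  exact mul_le_mul_left (mul_le_mul' hb1 hb1) _
          · have hswap : (∑' n : Z2, ∑' p : Z2 × Z2 × Z2, (if n = p.1 - p.2.1 + p.2.2 then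
                (χ p.1 + χ p.2.1 + χ p.2.2) *
                  ((‖β s p.1‖₊ : ℝ≥0∞) * (‖β s p.2.1‖₊ : ℝ≥0∞) * (‖β s p.2.2‖₊ : ℝ≥0∞)) else 0))
                = ∑' p : Z2 × Z2 × Z2, (χ p.1 + χ p.2.1 + χ p.2.2) *
                  ((‖β s p.1‖₊ : ℝ≥0∞) * (‖β s p.2.1‖₊ : ℝ≥0∞) * (‖β s p.2.2‖₊ : ℝ≥0∞)) := by
              rw [ENNReal.tsum_comm]
              exact tsum_congr fun p => tsum_ite_eq _ _
            rw [hswap]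
            have hdist : ∀ p : Z2 × Z2 × Z2, (χ p.1 + χ p.2.1 + χ p.2.2) *
                  ((‖β s p.1‖₊ : ℝ≥0∞) * (‖β s p.2.1‖₊ : ℝ≥0∞) * (‖β s p.2.2‖₊ : ℝ≥0∞))
                = (fun m => χ m * (‖β s m‖₊:ℝ≥0∞)) p.1 * (‖β s p.2.1‖₊:ℝ≥0∞) * (‖β s p.2.2‖₊:ℝ≥0∞)
                + (‖β s p.1‖₊:ℝ≥0∞) * (fun m => χ m * (‖β s m‖₊:ℝ≥0∞)) p.2.1 * (‖β s p.2.2‖₊:ℝ≥0∞)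
                + (‖β s p.1‖₊:ℝ≥0∞) * (‖β s p.2.1‖₊:ℝ≥0∞) * (fun m => χ m * (‖β s m‖₊:ℝ≥0∞)) p.2.2 := by
              intro p; simp only []; ring
            rw [tsum_congr hdist, ENNReal.tsum_add, ENNReal.tsum_add]
            have e1 := etsum_triple (fun m => χ m * (‖β s m‖₊:ℝ≥0∞))
              (fun m => (‖β s m‖₊:ℝ≥0∞)) (fun m => (‖β s m‖₊:ℝ≥0∞))
            have e2 := etsum_triple (fun m => (‖β s m‖₊:ℝ≥0∞))
              (fun m => χ m * (‖β s m‖₊:ℝ≥0∞)) (fun m => (‖β s m‖₊:ℝ≥0∞))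
            have e3 := etsum_triple (fun m => (‖β s m‖₊:ℝ≥0∞))
              (fun m => (‖β s m‖₊:ℝ≥0∞)) (fun m => χ m * (‖β s m‖₊:ℝ≥0∞))
            rw [e1, e2, e3]
            refine le_of_eq ?_
            ring
      _ = 4 * (S * S) * Em := by ring
      _ ≤ 4 * (ENNReal.ofReal B0 * ENNReal.ofReal B0) * Em :=
          mul_le_mul' (mul_le_mul' le_rfl (mul_le_mul' hSB hSB)) le_rfl
      _ ≤ ENNReal.ofReal K * ENNReal.ofReal (μf s) := by
          rw [← hEmeq]
          refine mul_le_mul_left ?_ _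
          have h4 : (4:ℝ≥0∞) = ENNReal.ofReal 4 := by
            rw [ENNReal.ofReal_ofNat]
          rw [h4, ← ENNReal.ofReal_mul hB0n, ← ENNReal.ofReal_mul (by norm_num : (0:ℝ) ≤ 4)]
          refine ENNReal.ofReal_le_ofReal ?_
          rw [hK]
          nlinarith [hB0n]
  -- the integral inequality
  have hineq : ∀ u ∈ Icc (0:ℝ) T, μf u ≤ K * ∫ s in (0:ℝ)..u, μf s := by
    intro u hu
    have huI : Icc (0:ℝ) u ⊆ Icc (0:ℝ) T := Icc_subset_Icc le_rfl hu.2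
    have hIocI : Ioc (0:ℝ) u ⊆ I := fun x hx => hIcc (huI ⟨le_of_lt hx.1, hx.2⟩)
    have hch : ∀ n : Z2, AEMeasurable (fun s => (if n ∈ Λ then 0 else (‖F n s‖₊:ℝ≥0∞)))
        (volume.restrict (Ioc (0:ℝ) u)) := by
      intro n
      by_cases hn : n ∈ Λ
      · simpa [hn] using aemeasurable_const (μ := volume.restrict (Ioc (0:ℝ) u)) (b := (0:ℝ≥0∞))
      · have hcF : ContinuousOn (F n) (Ioc (0:ℝ) u) := (hFcont n).mono hIocI
        have hmeas : AEMeasurable (F n) (volume.restrict (Ioc (0:ℝ) u)) :=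
          hcF.aemeasurable measurableSet_Ioc
        have : AEMeasurable (fun x => (‖F n x‖₊ : ℝ≥0∞)) (volume.restrict (Ioc (0:ℝ) u)) := hmeas.enorm
        simpa [hn] using this
    have hμInt : IntegrableOn μf (Ioc (0:ℝ) u) := by
      have hcμ : ContinuousOn μf (Icc (0:ℝ) u) := (hμcont.mono (fun x hx => hIcc (huI hx)))
      exact hcμ.integrableOn_Icc.mono_set Ioc_subset_Icc_self
    have hIntnonneg : 0 ≤ ∫ s in Ioc (0:ℝ) u, μf s :=
      setIntegral_nonneg measurableSet_Ioc (fun x _ => hμ0 x)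
    have main : ENNReal.ofReal (μf u) ≤ ENNReal.ofReal (K * ∫ s in Ioc (0:ℝ) u, μf s) := by
      calc ENNReal.ofReal (μf u)
          = ∑' n : Z2, (if n ∈ Λ then 0 else (‖β u n‖₊:ℝ≥0∞)) := hEμ u (hIcc hu)
        _ ≤ ∑' n : Z2, (if n ∈ Λ then 0 else ∫⁻ s in Ioc (0:ℝ) u, (‖F n s‖₊:ℝ≥0∞)) := by
            refine ENNReal.tsum_le_tsum fun n => ?_
            by_cases hn : n ∈ Λ
            · simp [hn]
            · simp only [hn, if_false]
              rw [hFTC u hu n hn, intervalIntegral.integral_of_le hu.1]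
              exact enorm_integral_le_lintegral_enorm _
        _ = ∑' n : Z2, ∫⁻ s in Ioc (0:ℝ) u, (if n ∈ Λ then 0 else (‖F n s‖₊:ℝ≥0∞)) := by
            refine tsum_congr fun n => ?_
            by_cases hn : n ∈ Λ <;> simp [hn]
        _ = ∫⁻ s in Ioc (0:ℝ) u, ∑' n : Z2, (if n ∈ Λ then 0 else (‖F n s‖₊:ℝ≥0∞)) :=
            (lintegral_tsum hch).symm
        _ ≤ ∫⁻ s in Ioc (0:ℝ) u, ENNReal.ofReal K * ENNReal.ofReal (μf s) := by
            refine lintegral_mono_ae ?_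
            rw [ae_restrict_iff' measurableSet_Ioc]
            exact ae_of_all _ (fun x hx => hcore x ⟨le_of_lt hx.1, hx.2.trans hu.2⟩)
        _ = ENNReal.ofReal K * ∫⁻ s in Ioc (0:ℝ) u, ENNReal.ofReal (μf s) :=
            lintegral_const_mul' _ _ ENNReal.ofReal_ne_top
        _ = ENNReal.ofReal K * ENNReal.ofReal (∫ s in Ioc (0:ℝ) u, μf s) := by
            rw [ofReal_integral_eq_lintegral_ofReal hμInt (ae_of_all _ hμ0)]
        _ = ENNReal.ofReal (K * ∫ s in Ioc (0:ℝ) u, μf s) := by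
            rw [ENNReal.ofReal_mul hK0.le]
    have hfin := (ENNReal.ofReal_le_ofReal_iff (by positivity)).1 main
    rwa [intervalIntegral.integral_of_le hu.1]
  -- Gronwall
  have hclampmem : ∀ s : ℝ, min (max s 0) T ∈ Icc (0:ℝ) T :=
    fun s => ⟨le_min (le_max_right s 0) hT0, min_le_right _ _⟩
  set g : ℝ → ℝ := fun s => μf (min (max s 0) T) with hgdef
  have hgcont : Continuous g := by
    refine (hμcont.mono hIcc).comp_continuous
      ((continuous_id.max continuous_const).min continuous_const) hclampmem
  have hgeq : ∀ s ∈ Icc (0:ℝ) T, g s = μf s := by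
    intro s hs
    rw [hgdef]
    simp only []
    rw [max_eq_left hs.1, min_eq_left hs.2]
  set ψ : ℝ → ℝ := fun u => ∫ s in (0:ℝ)..u, g s with hψdef
  have hψd : ∀ u : ℝ, HasDerivAt ψ (g u) u := by
    intro u
    exact intervalIntegral.integral_hasDerivAt_right (hgcont.intervalIntegrable _ _)
      (hgcont.stronglyMeasurable.stronglyMeasurableAtFilter) hgcont.continuousAt
  have hgron := norm_le_gronwallBound_of_norm_deriv_right_le (f := ψ) (f' := g)
    (δ := 0) (K := K) (ε := 0) (a := 0) (b := T)
    (fun x _ => (hψd x).continuousAt.continuousWithinAt)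
    (fun x _ => (hψd x).hasDerivWithinAt)
    (by rw [hψdef]; simp [intervalIntegral.integral_same])
    (by
      intro x hx
      have hxIcc : x ∈ Icc (0:ℝ) T := ⟨hx.1, le_of_lt hx.2⟩
      have h2 : (∫ s in (0:ℝ)..x, g s) = ∫ s in (0:ℝ)..x, μf s := by
        refine intervalIntegral.integral_congr ?_
        intro s hs
        rw [uIcc_of_le hx.1] at hs
        exact hgeq s ⟨hs.1, hs.2.trans hxIcc.2⟩
      rw [Real.norm_eq_abs, Real.norm_eq_abs, _root_.abs_of_nonneg (by rw [hgeq x hxIcc]; exact hμ0 x)]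
      rw [hgeq x hxIcc]
      calc μf x ≤ K * ∫ s in (0:ℝ)..x, μf s := hineq x hxIcc
        _ ≤ K * |ψ x| := by
            refine mul_le_mul_of_nonneg_left ?_ hK0.le
            rw [hψdef]
            simp only []
            rw [h2]
            exact le_abs_self _
        _ = K * |ψ x| + 0 := by ring)
  have hψT : ψ T = 0 := by
    have := hgron T ⟨hT0, le_rfl⟩
    rw [sub_zero, gronwallBound_ε0] at this
    simp only [zero_mul] at this
    have habs : |ψ T| ≤ 0 := by simpa [Real.norm_eq_abs] using this
    have := abs_nonneg (ψ T)
    have : |ψ T| = 0 := le_antisymm habs (abs_nonneg _)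
    exact abs_eq_zero.1 this
  have hμT : μf T = 0 := by
    have h2 : (∫ s in (0:ℝ)..T, g s) = ∫ s in (0:ℝ)..T, μf s := by
      refine intervalIntegral.integral_congr ?_
      intro s hs
      rw [uIcc_of_le hT0] at hs
      exact hgeq s hs
    have hle := hineq T ⟨hT0, le_rfl⟩
    rw [← h2] at hle
    have : μf T ≤ K * ψ T := hle
    rw [hψT, mul_zero] at this
    exact le_antisymm this (hμ0 T)
  intro n hn
  have hterm : ‖β T n‖ ≤ μf T := by
    have h := Summable.le_tsum (hμsummand T hTI) n (fun m _ => by split_ifs <;> positivity)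
    simpa [hn] using h
  rw [hμT] at hterm
  have : ‖β T n‖ = 0 := le_antisymm hterm (norm_nonneg _)
  simpa using this


lemma invariance (Λ : Finset Z2) (hΛ : ClosedSet Λ)
    (I : Set ℝ) (hI : I.OrdConnected) (h0 : (0:ℝ) ∈ I)
    (β : ℝ → Z2 → ℂ)
    (hl1 : ∀ t ∈ I, Summable (fun n : Z2 => ‖β t n‖))
    (hcont : ∀ t₀ ∈ I, ∀ ε : ℝ, 0 < ε → ∃ η : ℝ, 0 < η ∧
      ∀ t ∈ I, |t - t₀| < η → (∑' n : Z2, ‖β t n - β t₀ n‖) < ε)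
    (hode : ∀ t ∈ I, ∀ n : Z2, HasDerivAt (fun s => β s n)
        (Complex.I * (-(β t n) * (‖β t n‖ : ℂ) ^ 2 + resSum (β t) n)) t)
    (hsupp : ∀ n : Z2, n ∉ Λ → β 0 n = 0) :
    ∀ t ∈ I, ∀ n : Z2, n ∉ Λ → β t n = 0 := by
  intro t ht n hn
  rcases le_or_gt 0 t with h | h
  · exact key Λ hΛ I hI h0 Complex.I (by simp) β hl1 hcont hode hsupp t ht h n hn
  · set J : Set ℝ := (fun x : ℝ => -x) ⁻¹' I with hJ
    have hJord : J.OrdConnected := by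
      constructor
      intro x hx y hy z hz
      have hmem : -z ∈ Icc (-y) (-x) := ⟨neg_le_neg hz.2, neg_le_neg hz.1⟩
      exact hI.out hy hx hmem
    have h0J : (0:ℝ) ∈ J := by simpa [hJ] using h0
    have hl1' : ∀ s ∈ J, Summable fun m : Z2 => ‖β (-s) m‖ := fun s hs => hl1 (-s) hs
    have hcont' : ∀ t₀ ∈ J, ∀ ε : ℝ, 0 < ε → ∃ η : ℝ, 0 < η ∧
        ∀ s ∈ J, |s - t₀| < η → (∑' m : Z2, ‖β (-s) m - β (-t₀) m‖) < ε := by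
      intro t₀ ht₀ ε hε
      obtain ⟨η, hη, hB⟩ := hcont (-t₀) ht₀ ε hε
      refine ⟨η, hη, fun s hs hd => ?_⟩
      have habs : |(-s) - (-t₀)| < η := by
        have : (-s) - (-t₀) = -(s - t₀) := by ring
        rw [this, abs_neg]
        exact hd
      exact hB (-s) hs habs
    have hode' : ∀ s ∈ J, ∀ m : Z2, HasDerivAt (fun r => β (-r) m)
        ((-Complex.I) * (-(β (-s) m) * (‖β (-s) m‖ : ℂ)^2 + resSum (β (-s)) m)) s := by
      intro s hs m
      have h1 := hode (-s) hs m
      have h2 : HasDerivAt (fun r : ℝ => -r) (-1 : ℝ) s := hasDerivAt_neg' s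
      have h3 := HasDerivAt.scomp (x := s) h1 h2
      have hval : (-1 : ℝ) • (Complex.I * (-(β (-s) m) * (‖β (-s) m‖ : ℂ)^2 + resSum (β (-s)) m))
          = (-Complex.I) * (-(β (-s) m) * (‖β (-s) m‖ : ℂ)^2 + resSum (β (-s)) m) := by
        rw [neg_smul, one_smul, neg_mul]
        simp
      rw [hval] at h3
      exact h3
    have hres := key Λ hΛ J hJord h0J (-Complex.I) (by simp) (fun s m => β (-s) m)
      hl1' hcont' hode' (fun m hm => by simpa using hsupp m hm) (-t)
      (by simpa [hJ] using ht) (by linarith) n hn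
    simpa using hres


lemma mem_lamUnion {N : ℕ} {Lam : ℕ → Finset Z2} {j : ℕ} (h1 : 1 ≤ j) (h2 : j ≤ N) {n : Z2}
    (hn : n ∈ Lam j) : n ∈ LamUnion N Lam :=
  Finset.mem_biUnion.2 ⟨j, Finset.mem_Icc.2 ⟨h1, h2⟩, hn⟩

lemma gen_ne {N : ℕ} {Lam : ℕ → Finset Z2} (hdisj : LamDisjoint N Lam)
    {i k : ℕ} (hi1 : 1 ≤ i) (hiN : i ≤ N) (hk1 : 1 ≤ k) (hkN : k ≤ N) (hik : i ≠ k)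
    {a b : Z2} (ha : a ∈ Lam i) (hb : b ∈ Lam k) : a ≠ b := by
  rintro rfl
  exact Finset.disjoint_left.1
    (hdisj i (Finset.mem_Icc.2 ⟨hi1, hiN⟩) k (Finset.mem_Icc.2 ⟨hk1, hkN⟩) hik) ha hb

lemma gen_eq {N : ℕ} {Lam : ℕ → Finset Z2} (hdisj : LamDisjoint N Lam)
    {i k : ℕ} (hi1 : 1 ≤ i) (hiN : i ≤ N) (hk1 : 1 ≤ k) (hkN : k ≤ N)
    {a : Z2} (ha : a ∈ Lam i) (hb : a ∈ Lam k) : i = k := by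
  by_contra hik
  exact gen_ne hdisj hi1 hiN hk1 hkN hik ha hb rfl

lemma quad_eq {x y z : Z2} (h1 : x.1 + y.1 = 2 * z.1) (h2 : x.2 + y.2 = 2 * z.2)
    (hq : sqz x + sqz y = 2 * sqz z) : x = y ∧ x = z := by
  simp only [sqz] at hq
  have key1 : (x.1 - y.1)^2 + (x.2 - y.2)^2 = 0 := by
    linear_combination 2*hq - (x.1+y.1+2*z.1)*h1 - (x.2+y.2+2*z.2)*h2
  have k1 : x.1 = y.1 := by nlinarith [sq_nonneg (x.1 - y.1), sq_nonneg (x.2 - y.2)]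
  have k2 : x.2 = y.2 := by nlinarith [sq_nonneg (x.1 - y.1), sq_nonneg (x.2 - y.2)]
  have hz1 : x.1 = z.1 := by omega
  have hz2 : x.2 = z.2 := by omega
  exact ⟨Prod.ext k1 k2, Prod.ext hz1 hz2⟩

/-- facts about a child family `(n, c₁, sp, c₂)` with `n ∈ Λ_j` a parent -/
lemma child_facts {N : ℕ} {Lam : ℕ → Finset Z2} (hdisj : LamDisjoint N Lam)
    {j : ℕ} (hj1 : 1 ≤ j) (hjN : j < N) {n c₁ sp c₂ : Z2} (hn : n ∈ Lam j)
    (hfam : NuclearFamily N Lam n c₁ sp c₂) :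
    memA c₁ sp c₂ n ∧ memA c₂ sp c₁ n ∧ c₁ ≠ c₂ := by
  obtain ⟨⟨hlin, hsq, hne1, hne2⟩, j', hj'1, hj'N, hn', hsp', hc₁', hc₂'⟩ := hfam
  have hjj : j = j' := gen_eq hdisj hj1 (le_of_lt hjN) hj'1 (le_of_lt hj'N) hn hn'
  subst hjj
  have hc1n : c₁ ≠ n :=
    gen_ne hdisj (by omega) (by omega) hj1 (le_of_lt hjN) (by omega) hc₁' hn
  have hc2n : c₂ ≠ n :=
    gen_ne hdisj (by omega) (by omega) hj1 (le_of_lt hjN) (by omega) hc₂' hn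
  refine ⟨⟨by linear_combination -hlin, by linear_combination -hsq, hc1n, hc2n⟩,
    ⟨by linear_combination -hlin, by linear_combination -hsq, hc2n, hc1n⟩, ?_⟩
  intro hcc
  subst hcc
  -- now hlin : n - c₁ + sp = c₁
  have e1 : n.1 + sp.1 = 2 * c₁.1 := by
    have := congrArg Prod.fst hlin
    simp only [Prod.fst_sub, Prod.fst_add] at this
    omega
  have e2 : n.2 + sp.2 = 2 * c₁.2 := by
    have := congrArg Prod.snd hlin
    simp only [Prod.snd_sub, Prod.snd_add] at this
    omega
  have e3 : sqz n + sqz sp = 2 * sqz c₁ := by omega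
  obtain ⟨hns, hnc⟩ := quad_eq e1 e2 e3
  exact (gen_ne hdisj hj1 (le_of_lt hjN) (by omega) (by omega) (by omega) hn hc₁') hnc

/-- facts about a parent family `(pa₁, n, pa₂, sib)` with `n ∈ Λ_j` a child -/
lemma parent_facts {N : ℕ} {Lam : ℕ → Finset Z2} (hdisj : LamDisjoint N Lam)
    {j : ℕ} (hj1 : 1 ≤ j) (hjN : j ≤ N) {n pa₁ pa₂ sib : Z2} (hn : n ∈ Lam j)
    (hfam : NuclearFamily N Lam pa₁ n pa₂ sib) :
    memA pa₁ sib pa₂ n ∧ memA pa₂ sib pa₁ n ∧ pa₁ ≠ pa₂ := by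
  obtain ⟨⟨hlin, hsq, hne1, hne2⟩, j', hj'1, hj'N, hp₁', hp₂', hn', hs'⟩ := hfam
  have hjj : j = j' + 1 := gen_eq hdisj hj1 hjN (by omega) (by omega) hn hn'
  have hp1n : pa₁ ≠ n :=
    gen_ne hdisj hj'1 (le_of_lt hj'N) hj1 hjN (by omega) hp₁' hn
  have hp2n : pa₂ ≠ n :=
    gen_ne hdisj hj'1 (le_of_lt hj'N) hj1 hjN (by omega) hp₂' hn
  refine ⟨⟨by linear_combination hlin, by linear_combination hsq, hp1n, hp2n⟩,
    ⟨by linear_combination hlin, by linear_combination hsq, hp2n, hp1n⟩, ?_⟩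
  intro hpp
  subst hpp
  -- hlin : pa₁ - n + pa₁ = sib
  have e1 : n.1 + sib.1 = 2 * pa₁.1 := by
    have := congrArg Prod.fst hlin
    simp only [Prod.fst_sub, Prod.fst_add] at this
    omega
  have e2 : n.2 + sib.2 = 2 * pa₁.2 := by
    have := congrArg Prod.snd hlin
    simp only [Prod.snd_sub, Prod.snd_add] at this
    omega
  have e3 : sqz n + sqz sib = 2 * sqz pa₁ := by omega
  obtain ⟨hns, hnp⟩ := quad_eq e1 e2 e3
  -- n = sib and n = pa₁, so pa₁ = sib, contradiction with hne1
  exact hne1 (hnp.symm.trans hns)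


lemma classify {N : ℕ} {Lam : ℕ → Finset Z2} (hdisj : LamDisjoint N Lam)
    (hc2 : Cond2 N Lam) (hc3 : Cond3 N Lam) (hc5 : Cond5 N Lam)
    (spouse child₁ child₂ sibling parent₁ parent₂ : Z2 → Z2)
    (hch : ∀ j : ℕ, 1 ≤ j → j < N → ∀ n ∈ Lam j,
      NuclearFamily N Lam n (child₁ n) (spouse n) (child₂ n))
    (hpar : ∀ j : ℕ, 1 ≤ j → j < N → ∀ n ∈ Lam (j + 1),
      NuclearFamily N Lam (parent₁ n) n (parent₂ n) (sibling n))
    {j : ℕ} (hj1 : 1 ≤ j) (hjN : j ≤ N) {n : Z2} (hn : n ∈ Lam j)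
    {p₁ p₂ p₃ : Z2} (hp : memA p₁ p₂ p₃ n)
    (h1 : p₁ ∈ LamUnion N Lam) (h2 : p₂ ∈ LamUnion N Lam) (h3 : p₃ ∈ LamUnion N Lam) :
    (j < N ∧ p₂ = spouse n ∧
      ((p₁ = child₁ n ∧ p₃ = child₂ n) ∨ (p₁ = child₂ n ∧ p₃ = child₁ n)))
    ∨ (2 ≤ j ∧ p₂ = sibling n ∧
      ((p₁ = parent₁ n ∧ p₃ = parent₂ n) ∨ (p₁ = parent₂ n ∧ p₃ = parent₁ n))) := by
  have hnU : n ∈ LamUnion N Lam := mem_lamUnion hj1 hjN hn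
  rcases hc5 p₁ p₂ p₃ n h1 h2 h3 hnU hp with hfam | hfam
  · -- n is a child of the family (p₁, p₂, p₃, n)
    right
    obtain ⟨⟨hlin, hsq, hne1, hne2⟩, j', hj'1, hj'N, hp₁', hp₃', hp₂', hn'⟩ := hfam
    have hjj : j = j' + 1 := gen_eq hdisj hj1 hjN (by omega) (by omega) hn hn'
    refine ⟨by omega, ?_⟩
    -- permuted family with n in the second slot
    have hperm : NuclearFamily N Lam p₁ n p₃ p₂ := by
      refine ⟨⟨by linear_combination hlin, by linear_combination hsq, ?_, ?_⟩,
        j', hj'1, hj'N, hp₁', hp₃', hn', hp₂'⟩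
      · exact gen_ne hdisj hj'1 (by omega) (by omega) (by omega) (by omega) hp₁' hp₂'
      · exact gen_ne hdisj hj'1 (by omega) (by omega) (by omega) (by omega) hp₃' hp₂'
    obtain ⟨a₁, a₃, a₄, hafam, huniq⟩ := hc3 j' hj'1 hj'N n hn'
    have H1 := huniq p₁ p₃ p₂ hperm
    have H2 := huniq (parent₁ n) (parent₂ n) (sibling n) (by
      have := hpar j' hj'1 hj'N n hn'
      exact this)
    refine ⟨H1.1.trans H2.1.symm, ?_⟩
    rcases H1.2 with ⟨e1, e2⟩ | ⟨e1, e2⟩ <;> rcases H2.2 with ⟨f1, f2⟩ | ⟨f1, f2⟩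
    · exact Or.inl ⟨e1.trans f1.symm, e2.trans f2.symm⟩
    · exact Or.inr ⟨e1.trans f2.symm, e2.trans f1.symm⟩
    · exact Or.inr ⟨e1.trans f2.symm, e2.trans f1.symm⟩
    · exact Or.inl ⟨e1.trans f1.symm, e2.trans f2.symm⟩
  · -- n is a parent of the family (p₂, p₁, n, p₃)
    left
    obtain ⟨⟨hlin, hsq, hne1, hne2⟩, j', hj'1, hj'N, hp₂', hn', hp₁', hp₃'⟩ := hfam
    have hjj : j = j' := gen_eq hdisj hj1 hjN hj'1 (by omega) hn hn'
    subst hjj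
    refine ⟨hj'N, ?_⟩
    have hperm : NuclearFamily N Lam n p₁ p₂ p₃ := by
      refine ⟨⟨by linear_combination hlin, by linear_combination hsq, ?_, ?_⟩,
        j, hj1, hj'N, hn', hp₂', hp₁', hp₃'⟩
      · exact gen_ne hdisj hj1 (by omega) (by omega) (by omega) (by omega) hn' hp₃'
      · exact gen_ne hdisj hj1 (by omega) (by omega) (by omega) (by omega) hp₂' hp₃'
    obtain ⟨b₂, b₃, b₄, hbfam, huniq⟩ := hc2 j hj1 hj'N n hn
    have H1 := huniq p₁ p₂ p₃ hperm
    have H2 := huniq (child₁ n) (spouse n) (child₂ n) (hch j hj1 hj'N n hn)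
    refine ⟨H1.1.trans H2.1.symm, ?_⟩
    rcases H1.2 with ⟨e1, e2⟩ | ⟨e1, e2⟩ <;> rcases H2.2 with ⟨f1, f2⟩ | ⟨f1, f2⟩
    · exact Or.inl ⟨e1.trans f1.symm, e2.trans f2.symm⟩
    · exact Or.inr ⟨e1.trans f2.symm, e2.trans f1.symm⟩
    · exact Or.inr ⟨e1.trans f2.symm, e2.trans f1.symm⟩
    · exact Or.inl ⟨e1.trans f1.symm, e2.trans f2.symm⟩


lemma resSum_eval {N : ℕ} {Lam : ℕ → Finset Z2} (hdisj : LamDisjoint N Lam)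
    (hc2 : Cond2 N Lam) (hc3 : Cond3 N Lam) (hc4 : Cond4 N Lam) (hc5 : Cond5 N Lam)
    (spouse child₁ child₂ sibling parent₁ parent₂ : Z2 → Z2)
    (hch : ∀ j : ℕ, 1 ≤ j → j < N → ∀ n ∈ Lam j,
      NuclearFamily N Lam n (child₁ n) (spouse n) (child₂ n))
    (hpar : ∀ j : ℕ, 1 ≤ j → j < N → ∀ n ∈ Lam (j + 1),
      NuclearFamily N Lam (parent₁ n) n (parent₂ n) (sibling n))
    {j : ℕ} (hj1 : 1 ≤ j) (hjN : j ≤ N) {n : Z2} (hn : n ∈ Lam j)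
    (g : Z2 → ℂ) (hg : ∀ m : Z2, m ∉ LamUnion N Lam → g m = 0) :
    resSum g n
      = (if j < N then 2 * g (child₁ n) * g (child₂ n) * (starRingEnd ℂ) (g (spouse n)) else 0)
      + (if 2 ≤ j then 2 * g (parent₁ n) * g (parent₂ n) * (starRingEnd ℂ) (g (sibling n)) else 0) := by
  classical
  rw [resSum_eq]
  -- generic classification of non-vanishing summands
  have hclass : ∀ p : Z2 × Z2 × Z2, rf g n p ≠ 0 →
      (j < N ∧ p.2.1 = spouse n ∧
        ((p.1 = child₁ n ∧ p.2.2 = child₂ n) ∨ (p.1 = child₂ n ∧ p.2.2 = child₁ n)))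
      ∨ (2 ≤ j ∧ p.2.1 = sibling n ∧
        ((p.1 = parent₁ n ∧ p.2.2 = parent₂ n) ∨ (p.1 = parent₂ n ∧ p.2.2 = parent₁ n))) := by
    intro p hne
    have hA : memA p.1 p.2.1 p.2.2 n := by
      by_contra hA
      exact hne (by simp [rf, hA])
    have hg1 : g p.1 ≠ 0 := by
      intro hz; exact hne (by simp [rf, hz])
    have hg2 : g p.2.1 ≠ 0 := by
      intro hz; exact hne (by simp [rf, hz])
    have hg3 : g p.2.2 ≠ 0 := by
      intro hz; exact hne (by simp [rf, hz])
    have hm1 : p.1 ∈ LamUnion N Lam := by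
      by_contra h; exact hg1 (hg _ h)
    have hm2 : p.2.1 ∈ LamUnion N Lam := by
      by_contra h; exact hg2 (hg _ h)
    have hm3 : p.2.2 ∈ LamUnion N Lam := by
      by_contra h; exact hg3 (hg _ h)
    exact classify hdisj hc2 hc3 hc5 spouse child₁ child₂ sibling parent₁ parent₂
      hch hpar hj1 hjN hn hA hm1 hm2 hm3
  by_cases hjN' : j < N <;> by_cases hj2 : 2 ≤ j
  · -- both children and parents
    obtain ⟨hA1, hA2, hc12⟩ := child_facts hdisj hj1 hjN' hn (hch j hj1 hjN' n hn)
    have hj' : j - 1 + 1 = j := by omega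
    have hfp := hpar (j-1) (by omega) (by omega) n (by rw [hj']; exact hn)
    obtain ⟨hB1, hB2, hp12⟩ := parent_facts hdisj hj1 hjN hn hfp
    have hss : sibling n ≠ spouse n := hc4 n (child₁ n) (spouse n) (child₂ n)
      (parent₁ n) (parent₂ n) (sibling n) (hch j hj1 hjN' n hn) hfp
    set q1 : Z2 × Z2 × Z2 := (child₁ n, spouse n, child₂ n) with hq1
    set q2 : Z2 × Z2 × Z2 := (child₂ n, spouse n, child₁ n) with hq2
    set q3 : Z2 × Z2 × Z2 := (parent₁ n, sibling n, parent₂ n) with hq3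
    set q4 : Z2 × Z2 × Z2 := (parent₂ n, sibling n, parent₁ n) with hq4
    have hq12 : q1 ≠ q2 := fun h => hc12 (congrArg Prod.fst h)
    have hq34 : q3 ≠ q4 := fun h => hp12 (congrArg Prod.fst h)
    have hq13 : q1 ≠ q3 := fun h => hss (congrArg (fun r : Z2 × Z2 × Z2 => r.2.1) h).symm
    have hq14 : q1 ≠ q4 := fun h => hss (congrArg (fun r : Z2 × Z2 × Z2 => r.2.1) h).symm
    have hq23 : q2 ≠ q3 := fun h => hss (congrArg (fun r : Z2 × Z2 × Z2 => r.2.1) h).symm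
    have hq24 : q2 ≠ q4 := fun h => hss (congrArg (fun r : Z2 × Z2 × Z2 => r.2.1) h).symm
    have hzero : ∀ p ∉ ({q1, q2, q3, q4} : Finset (Z2 × Z2 × Z2)), rf g n p = 0 := by
      intro p hp
      by_contra hne
      apply hp
      rcases hclass p hne with ⟨_, hsp, ⟨ha, hb⟩ | ⟨ha, hb⟩⟩ | ⟨_, hsp, ⟨ha, hb⟩ | ⟨ha, hb⟩⟩
      · have hpq : p = q1 := Prod.ext ha (Prod.ext hsp hb)
        simp [hpq]
      · have hpq : p = q2 := Prod.ext ha (Prod.ext hsp hb)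
        simp [hpq]
      · have hpq : p = q3 := Prod.ext ha (Prod.ext hsp hb)
        simp [hpq]
      · have hpq : p = q4 := Prod.ext ha (Prod.ext hsp hb)
        simp [hpq]
    rw [tsum_eq_sum hzero]
    rw [show ({q1, q2, q3, q4} : Finset (Z2 × Z2 × Z2))
        = insert q1 (insert q2 (insert q3 {q4})) from rfl]
    rw [Finset.sum_insert (by simp [hq12, hq13, hq14]),
      Finset.sum_insert (by simp [hq23, hq24]),
      Finset.sum_insert (by simp [hq34]), Finset.sum_singleton]
    have v1 : rf g n q1 = g (child₁ n) * (starRingEnd ℂ) (g (spouse n)) * g (child₂ n) := by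
      simp only [rf, hq1]
      rw [if_pos hA1]
    have v2 : rf g n q2 = g (child₂ n) * (starRingEnd ℂ) (g (spouse n)) * g (child₁ n) := by
      simp only [rf, hq2]
      rw [if_pos hA2]
    have v3 : rf g n q3 = g (parent₁ n) * (starRingEnd ℂ) (g (sibling n)) * g (parent₂ n) := by
      simp only [rf, hq3]
      rw [if_pos hB1]
    have v4 : rf g n q4 = g (parent₂ n) * (starRingEnd ℂ) (g (sibling n)) * g (parent₁ n) := by
      simp only [rf, hq4]
      rw [if_pos hB2]
    rw [v1, v2, v3, v4, if_pos hjN', if_pos hj2]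
    ring
  · -- children only (j = 1)
    obtain ⟨hA1, hA2, hc12⟩ := child_facts hdisj hj1 hjN' hn (hch j hj1 hjN' n hn)
    set q1 : Z2 × Z2 × Z2 := (child₁ n, spouse n, child₂ n) with hq1
    set q2 : Z2 × Z2 × Z2 := (child₂ n, spouse n, child₁ n) with hq2
    have hq12 : q1 ≠ q2 := fun h => hc12 (congrArg Prod.fst h)
    have hzero : ∀ p ∉ ({q1, q2} : Finset (Z2 × Z2 × Z2)), rf g n p = 0 := by
      intro p hp
      by_contra hne
      rcases hclass p hne with ⟨_, hsp, ⟨ha, hb⟩ | ⟨ha, hb⟩⟩ | ⟨hj2', _, _⟩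
      · have hpq : p = q1 := Prod.ext ha (Prod.ext hsp hb)
        exact hp (by simp [hpq])
      · have hpq : p = q2 := Prod.ext ha (Prod.ext hsp hb)
        exact hp (by simp [hpq])
      · exact hj2 hj2'
    rw [tsum_eq_sum hzero, Finset.sum_pair hq12]
    have v1 : rf g n q1 = g (child₁ n) * (starRingEnd ℂ) (g (spouse n)) * g (child₂ n) := by
      simp only [rf, hq1]
      rw [if_pos hA1]
    have v2 : rf g n q2 = g (child₂ n) * (starRingEnd ℂ) (g (spouse n)) * g (child₁ n) := by
      simp only [rf, hq2]
      rw [if_pos hA2]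
    rw [v1, v2, if_pos hjN', if_neg hj2]
    ring
  · -- parents only (j = N)
    have hj' : j - 1 + 1 = j := by omega
    have hfp := hpar (j-1) (by omega) (by omega) n (by rw [hj']; exact hn)
    obtain ⟨hB1, hB2, hp12⟩ := parent_facts hdisj hj1 hjN hn hfp
    set q3 : Z2 × Z2 × Z2 := (parent₁ n, sibling n, parent₂ n) with hq3
    set q4 : Z2 × Z2 × Z2 := (parent₂ n, sibling n, parent₁ n) with hq4
    have hq34 : q3 ≠ q4 := fun h => hp12 (congrArg Prod.fst h)
    have hzero : ∀ p ∉ ({q3, q4} : Finset (Z2 × Z2 × Z2)), rf g n p = 0 := by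
      intro p hp
      by_contra hne
      rcases hclass p hne with ⟨hjN'', _, _⟩ | ⟨_, hsp, ⟨ha, hb⟩ | ⟨ha, hb⟩⟩
      · exact hjN' hjN''
      · have hpq : p = q3 := Prod.ext ha (Prod.ext hsp hb)
        exact hp (by simp [hpq])
      · have hpq : p = q4 := Prod.ext ha (Prod.ext hsp hb)
        exact hp (by simp [hpq])
    rw [tsum_eq_sum hzero, Finset.sum_pair hq34]
    have v3 : rf g n q3 = g (parent₁ n) * (starRingEnd ℂ) (g (sibling n)) * g (parent₂ n) := by
      simp only [rf, hq3]
      rw [if_pos hB1]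
    have v4 : rf g n q4 = g (parent₂ n) * (starRingEnd ℂ) (g (sibling n)) * g (parent₁ n) := by
      simp only [rf, hq4]
      rw [if_pos hB2]
    rw [v3, v4, if_neg hjN', if_pos hj2]
    ring
  · -- no rectangles at all (N = j = 1)
    have hzero : ∀ p ∉ (∅ : Finset (Z2 × Z2 × Z2)), rf g n p = 0 := by
      intro p _
      by_contra hne
      rcases hclass p hne with ⟨hjN'', _, _⟩ | ⟨hj2', _, _⟩
      · exact hjN' hjN''
      · exact hj2 hj2'
    rw [tsum_eq_sum hzero, Finset.sum_empty, if_neg hjN', if_neg hj2]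
    ring

end S12

theorem stmt12 (Λ : Finset Z2) (hΛ : ClosedSet Λ)
    (I : Set ℝ) (hI : I.OrdConnected) (h0 : (0 : ℝ) ∈ I)
    (β : ℝ → Z2 → ℂ)
    -- `β(t) ∈ ℓ¹` and `β` is continuous in `ℓ¹` on `I`
    (hl1 : ∀ t ∈ I, Summable (fun n : Z2 => ‖β t n‖))
    (hcont : ∀ t₀ ∈ I, ∀ ε : ℝ, 0 < ε → ∃ η : ℝ, 0 < η ∧
      ∀ t ∈ I, |t - t₀| < η → (∑' n : Z2, ‖β t n - β t₀ n‖) < ε)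
    -- `β` is coordinatewise `C¹` and solves the gauged resonant system
    (hode : ∀ t ∈ I, ∀ n : Z2,
      HasDerivAt (fun s => β s n)
        (Complex.I * (-(β t n) * (‖β t n‖ : ℂ) ^ 2 + resSum (β t) n)) t)
    (hsupp : ∀ n : Z2, n ∉ Λ → β 0 n = 0) :
    -- the support stays inside `Λ` for all times
    (∀ t ∈ I, ∀ n : Z2, n ∉ Λ → β t n = 0) ∧
    -- ... and if `Λ` is a union of generations satisfying `2_Λ`–`5_Λ`, the system
    -- reduces to the nuclear-family system
    (∀ (N : ℕ) (Lam : ℕ → Finset Z2),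
      Λ = LamUnion N Lam → LamDisjoint N Lam →
      Cond2 N Lam → Cond3 N Lam → Cond4 N Lam → Cond5 N Lam →
      ∀ spouse child₁ child₂ sibling parent₁ parent₂ : Z2 → Z2,
        (∀ j : ℕ, 1 ≤ j → j < N → ∀ n ∈ Lam j,
          NuclearFamily N Lam n (child₁ n) (spouse n) (child₂ n)) →
        (∀ j : ℕ, 1 ≤ j → j < N → ∀ n ∈ Lam (j + 1),
          NuclearFamily N Lam (parent₁ n) n (parent₂ n) (sibling n)) →
        ∀ t ∈ I, ∀ j : ℕ, 1 ≤ j → j ≤ N → ∀ n ∈ Lam j,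
          HasDerivAt (fun s => β s n)
            (Complex.I * (-(β t n) * (‖β t n‖ : ℂ) ^ 2
              + (if j < N then
                  2 * β t (child₁ n) * β t (child₂ n) * (starRingEnd ℂ) (β t (spouse n))
                else 0)
              + (if 2 ≤ j then
                  2 * β t (parent₁ n) * β t (parent₂ n) * (starRingEnd ℂ) (β t (sibling n))
                else 0))) t) := by
  classical
  have hinv := S12.invariance Λ hΛ I hI h0 β hl1 hcont hode hsupp
  refine ⟨hinv, ?_⟩
  intro N Lam hΛeq hdisj hc2 hc3 hc4 hc5 spouse child₁ child₂ sibling parent₁ parent₂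
    hch hpar t ht j hj1 hjN n hn
  have hres : resSum (β t) n
      = (if j < N then
          2 * β t (child₁ n) * β t (child₂ n) * (starRingEnd ℂ) (β t (spouse n))
        else 0)
      + (if 2 ≤ j then
          2 * β t (parent₁ n) * β t (parent₂ n) * (starRingEnd ℂ) (β t (sibling n))
        else 0) := by
    refine S12.resSum_eval hdisj hc2 hc3 hc4 hc5 spouse child₁ child₂ sibling parent₁ parent₂
      hch hpar hj1 hjN hn (β t) (fun m hm => hinv t ht m ?_)
    rwa [hΛeq]
  have h := hode t ht n
  rw [hres] at h
  have heq : Complex.I * (-(β t n) * (‖β t n‖ : ℂ) ^ 2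
        + ((if j < N then
            2 * β t (child₁ n) * β t (child₂ n) * (starRingEnd ℂ) (β t (spouse n))
          else 0)
        + (if 2 ≤ j then
            2 * β t (parent₁ n) * β t (parent₂ n) * (starRingEnd ℂ) (β t (sibling n))
          else 0)))
      = Complex.I * (-(β t n) * (‖β t n‖ : ℂ) ^ 2
        + (if j < N then
            2 * β t (child₁ n) * β t (child₂ n) * (starRingEnd ℂ) (β t (spouse n))
          else 0)
        + (if 2 ≤ j then
            2 * β t (parent₁ n) * β t (parent₂ n) * (starRingEnd ℂ) (β t (sibling n))
          else 0)) := by ring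
  rw [heq] at h
  exact h

end
end

section
/- Let α : I → ℓ¹(ℤ²;ℂ) be continuous in ℓ¹ and coordinatewise C¹, solving the resonant truncated system −i (d/dt) α_n = |n|² α_n + Σ_{(n₁,n₂,n₃)∈A₀(n)} α_{n₁} conj(α_{n₂}) α_{n₃} for every n ∈ ℤ², the sums converging absolutely. Then the ℓ²-norm ‖α(t)‖_{ℓ²} is constant on I. -/
/-! STATEMENT 13: conservation of the `ℓ²` norm for the resonant truncated system. -/

noncomputable section

open Complex

/-- `(n₁, n₂, n₃) ∈ A₀(n)` -/
def memA0 (n₁ n₂ n₃ n : Z2) : Prop :=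
  n₁ - n₂ + n₃ = n ∧ sqz n₁ - sqz n₂ + sqz n₃ = sqz n

open scoped Classical in
/-- the `A₀(n)`-restricted cubic sum -/
def res0Sum (g : Z2 → ℂ) (n : Z2) : ℂ :=
  ∑' p : Z2 × Z2 × Z2,
    if memA0 p.1 p.2.1 p.2.2 n then
      g p.1 * (starRingEnd ℂ) (g p.2.1) * g p.2.2
    else 0

open scoped Classical

def trip (g : Z2 → ℂ) (n : Z2) (p : Z2 × Z2 × Z2) : ℂ :=
  if memA0 p.1 p.2.1 p.2.2 n then g p.1 * (starRingEnd ℂ) (g p.2.1) * g p.2.2 else 0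

lemma res0Sum_eq (g : Z2 → ℂ) (n : Z2) : res0Sum g n = ∑' p, trip g n p := rfl

lemma memA0_symm {n₁ n₂ n₃ n : Z2} : memA0 n₁ n₂ n₃ n ↔ memA0 n₂ n₁ n n₃ := by
  unfold memA0
  constructor <;> rintro ⟨h1, h2⟩ <;> refine ⟨?_, by omega⟩ <;> linear_combination -h1

lemma hasDerivAt_normSq {c : ℝ → ℂ} {c' : ℂ} {t : ℝ} (h : HasDerivAt c c' t) :
    HasDerivAt (fun s => ‖c s‖ ^ 2) (2 * (((starRingEnd ℂ) (c t)) * c').re) t := by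
  have hre : HasDerivAt (fun s => (c s).re) c'.re t :=
    (Complex.reCLM.hasFDerivAt.comp_hasDerivAt t h)
  have him : HasDerivAt (fun s => (c s).im) c'.im t :=
    (Complex.imCLM.hasFDerivAt.comp_hasDerivAt t h)
  have h2 : HasDerivAt (fun s => (c s).re ^ 2 + (c s).im ^ 2)
      (2 * (c t).re ^ 1 * c'.re + 2 * (c t).im ^ 1 * c'.im) t :=
    (hre.pow 2).add (him.pow 2)
  have : (fun s => (c s).re ^ 2 + (c s).im ^ 2) = fun s => ‖c s‖ ^ 2 := by
    funext s
    rw [Complex.sq_norm, Complex.normSq_apply]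
    ring
  rw [this] at h2
  convert h2 using 1
  simp [Complex.mul_re]
  ring

lemma re_deriv_eq (z R : ℂ) (m : ℤ) :
    2 * (((starRingEnd ℂ) z) * (Complex.I * ((m : ℂ) * z + R))).re
      = -2 * (((starRingEnd ℂ) z) * R).im := by
  simp [Complex.mul_re, Complex.mul_im, Complex.add_re, Complex.add_im]
  ring

section
variable {g : Z2 → ℂ}

lemma norm_trip_le (g : Z2 → ℂ) (n : Z2) (p : Z2 × Z2 × Z2) :
    ‖trip g n p‖ ≤ ‖g p.1‖ * (‖g p.2.1‖ * ‖g p.2.2‖) := by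
  unfold trip
  split
  · rw [norm_mul, norm_mul, RCLike.norm_conj]
    exact le_of_eq (by ring)
  · simp
    positivity

lemma summable2 (hg : Summable fun n => ‖g n‖) :
    Summable (fun p : Z2 × Z2 => ‖g p.1‖ * ‖g p.2‖) :=
  hg.mul_of_nonneg hg (fun _ => norm_nonneg _) (fun _ => norm_nonneg _)

lemma summable3 (hg : Summable fun n => ‖g n‖) :
    Summable (fun p : Z2 × Z2 × Z2 => ‖g p.1‖ * (‖g p.2.1‖ * ‖g p.2.2‖)) :=
  hg.mul_of_nonneg (summable2 hg) (fun _ => norm_nonneg _)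
    (fun _ => mul_nonneg (norm_nonneg _) (norm_nonneg _))

lemma summable4 (hg : Summable fun n => ‖g n‖) :
    Summable (fun q : Z2 × Z2 × Z2 × Z2 =>
      ‖g q.1‖ * (‖g q.2.1‖ * (‖g q.2.2.1‖ * ‖g q.2.2.2‖))) :=
  hg.mul_of_nonneg (summable3 hg) (fun _ => norm_nonneg _)
    (fun _ => mul_nonneg (norm_nonneg _) (mul_nonneg (norm_nonneg _) (norm_nonneg _)))

lemma summable_trip_norm (hg : Summable fun n => ‖g n‖) (n : Z2) :
    Summable (fun p => ‖trip g n p‖) :=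
  Summable.of_nonneg_of_le (fun _ => norm_nonneg _) (norm_trip_le g n) (summable3 hg)

lemma summable_trip (hg : Summable fun n => ‖g n‖) (n : Z2) :
    Summable (fun p => trip g n p) :=
  (summable_trip_norm hg n).of_norm

lemma tsum_triple_prod (hg : Summable fun n => ‖g n‖) :
    ∑' p : Z2 × Z2 × Z2, ‖g p.1‖ * (‖g p.2.1‖ * ‖g p.2.2‖) = (∑' k, ‖g k‖) ^ 3 := by
  rw [Summable.tsum_prod (summable3 hg)]
  have h2 : ∀ a : Z2, (∑' p : Z2 × Z2, ‖g a‖ * (‖g p.1‖ * ‖g p.2‖))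
      = ‖g a‖ * (∑' k, ‖g k‖) ^ 2 := by
    intro a
    rw [tsum_mul_left, Summable.tsum_prod (summable2 hg)]
    congr 1
    simp_rw [tsum_mul_left]
    rw [tsum_mul_right]
    ring
  calc ∑' (a : Z2), ∑' p : Z2 × Z2, ‖g a‖ * (‖g p.1‖ * ‖g p.2‖)
      = ∑' (a : Z2), ‖g a‖ * (∑' k, ‖g k‖) ^ 2 := by simp_rw [h2]
    _ = (∑' k, ‖g k‖) ^ 3 := by rw [tsum_mul_right]; ring

lemma res0Sum_bound (hg : Summable fun n => ‖g n‖) (n : Z2) :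
    ‖res0Sum g n‖ ≤ (∑' k, ‖g k‖) ^ 3 := by
  rw [res0Sum_eq]
  refine le_trans (norm_tsum_le_tsum_norm (summable_trip_norm hg n)) ?_
  rw [← tsum_triple_prod hg]
  exact Summable.tsum_le_tsum (norm_trip_le g n) (summable_trip_norm hg n) (summable3 hg)

def F (g : Z2 → ℂ) (q : Z2 × Z2 × Z2 × Z2) : ℂ :=
  (starRingEnd ℂ) (g q.1) * trip g q.1 q.2

lemma summable_F (hg : Summable fun n => ‖g n‖) : Summable (F g) := by
  refine Summable.of_norm_bounded (summable4 hg) (fun q => ?_)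
  rw [F, norm_mul, RCLike.norm_conj]
  exact mul_le_mul_of_nonneg_left (norm_trip_le g q.1 q.2) (norm_nonneg _)

def qswap : Z2 × Z2 × Z2 × Z2 ≃ Z2 × Z2 × Z2 × Z2 :=
  Function.Involutive.toPerm (fun q => (q.2.2.2, q.2.2.1, q.2.1, q.1)) (fun q => rfl)

lemma star_F (g : Z2 → ℂ) (q : Z2 × Z2 × Z2 × Z2) :
    star (F g q) = F g (qswap q) := by
  obtain ⟨n, n₁, n₂, n₃⟩ := q
  show star ((starRingEnd ℂ) (g n) * trip g n (n₁, n₂, n₃))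
      = (starRingEnd ℂ) (g n₃) * trip g n₃ (n₂, n₁, n)
  unfold trip
  by_cases h : memA0 n₁ n₂ n₃ n
  · rw [if_pos h, if_pos (memA0_symm.mp h)]
    simp only [star_mul', ← starRingEnd_apply, map_mul, Complex.conj_conj]
    ring
  · rw [if_neg h, if_neg (fun h' => h (memA0_symm.mpr h'))]
    simp

lemma im_tsum_F : (∑' q, F g q).im = 0 := by
  have h1 : star (∑' q, F g q) = ∑' q, star (F g q) := tsum_star
  have h2 : (∑' q, star (F g q)) = ∑' q, F g (qswap q) := by
    congr 1; funext q; exact star_F g q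
  have h3 : (∑' q, F g (qswap q)) = ∑' q, F g q := qswap.tsum_eq (F g)
  have : (starRingEnd ℂ) (∑' q, F g q) = ∑' q, F g q := by
    rw [starRingEnd_apply, h1, h2, h3]
  exact Complex.conj_eq_iff_im.mp this

set_option maxHeartbeats 1000000 in
lemma hasSum_H (hg : Summable fun n => ‖g n‖) :
    HasSum (fun n => (starRingEnd ℂ) (g n) * res0Sum g n) (∑' q, F g q) := by
  have h1 : ∀ n, HasSum (fun p => F g (n, p)) ((starRingEnd ℂ) (g n) * res0Sum g n) := by
    intro n
    rw [res0Sum_eq]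
    exact ((summable_trip hg n).hasSum).mul_left _
  exact HasSum.prod_fiberwise (summable_F hg).hasSum h1

lemma keyHasSum (hg : Summable fun n => ‖g n‖) :
    HasSum (fun n => -2 * ((starRingEnd ℂ) (g n) * res0Sum g n).im) 0 := by
  have h := (Complex.imCLM.hasSum (hasSum_H hg))
  rw [show Complex.imCLM (∑' q, F g q) = 0 from im_tsum_F] at h
  simpa using h.mul_left (-2)


end

lemma tail_est {β : Type*} {f g : β → ℝ} (hf : Summable f) (hg : Summable g)
    (h : ∀ n, f n ≤ g n) : ∑' n, f n ≤ ∑' n, g n := Summable.tsum_le_tsum h hf hg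

open scoped Classical in
theorem stmt13 (I : Set ℝ) (hI : I.OrdConnected) (α : ℝ → Z2 → ℂ)
    -- `α(t) ∈ ℓ¹` and `α` is continuous in `ℓ¹` on `I`
    (hl1 : ∀ t ∈ I, Summable (fun n : Z2 => ‖α t n‖))
    (hcont : ∀ t₀ ∈ I, ∀ ε : ℝ, 0 < ε → ∃ η : ℝ, 0 < η ∧
      ∀ t ∈ I, |t - t₀| < η → (∑' n : Z2, ‖α t n - α t₀ n‖) < ε)
    -- the resonant cubic sums converge absolutely
    (habs : ∀ t ∈ I, ∀ n : Z2, Summable (fun p : Z2 × Z2 × Z2 =>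
      ‖if memA0 p.1 p.2.1 p.2.2 n then
          α t p.1 * (starRingEnd ℂ) (α t p.2.1) * α t p.2.2
        else 0‖))
    -- `α` is coordinatewise `C¹` and solves the resonant truncated system
    (hode : ∀ t ∈ I, ∀ n : Z2,
      HasDerivAt (fun s => α s n)
        (Complex.I * ((sqz n : ℂ) * α t n + res0Sum (α t) n)) t) :
    ∀ t ∈ I, ∀ t' ∈ I, (∑' n : Z2, ‖α t n‖ ^ 2) = ∑' n : Z2, ‖α t' n‖ ^ 2 := by
  intro t ht t' ht'
  have hJI : Set.uIcc t t' ⊆ I := hI.uIcc_subset ht ht'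
  have htJ : t ∈ Set.uIcc t t' := Set.left_mem_uIcc
  have ht'J : t' ∈ Set.uIcc t t' := Set.right_mem_uIcc
  have hsum : ∀ s ∈ Set.uIcc t t', Summable fun n => ‖α s n‖ := fun s hs => hl1 s (hJI hs)
  have hNnn : ∀ s : ℝ, 0 ≤ ∑' n, ‖α s n‖ := fun s => tsum_nonneg fun n => norm_nonneg _
  have hsumd : ∀ s ∈ Set.uIcc t t', ∀ x ∈ Set.uIcc t t',
      Summable fun n => ‖α s n - α x n‖ := fun s hs x hx =>
    Summable.of_nonneg_of_le (fun _ => norm_nonneg _) (fun n => norm_sub_le _ _)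
      ((hsum s hs).add (hsum x hx))
  have hNle : ∀ s ∈ Set.uIcc t t', ∀ x ∈ Set.uIcc t t',
      (∑' n, ‖α s n‖) ≤ (∑' n, ‖α x n‖) + ∑' n, ‖α s n - α x n‖ := by
    intro s hs x hx
    rw [← Summable.tsum_add (hsum x hx) (hsumd s hs x hx)]
    refine Summable.tsum_le_tsum (fun n => ?_) (hsum s hs) ((hsum x hx).add (hsumd s hs x hx))
    have := norm_sub_norm_le (α s n) (α x n)
    linarith
  -- covering argument
  have cover : ∀ ε : ℝ, 0 < ε → ∃ T : Finset ℝ, T.Nonempty ∧ (↑T : Set ℝ) ⊆ Set.uIcc t t' ∧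
      ∀ s ∈ Set.uIcc t t', ∃ x ∈ T, (∑' n, ‖α s n - α x n‖) < ε := by
    intro ε hε
    have hη : ∀ x, x ∈ Set.uIcc t t' →
        ∃ η, 0 < η ∧ ∀ s ∈ I, |s - x| < η → (∑' n, ‖α s n - α x n‖) < ε :=
      fun x hx => hcont x (hJI hx) ε hε
    choose! η hη0 hηp using hη
    obtain ⟨T0, hT0J, hT0⟩ := (isCompact_uIcc (a := t) (b := t')).elim_nhds_subcover
      (fun x => Metric.ball x (η x)) (fun x hx => Metric.ball_mem_nhds _ (hη0 x hx))
    refine ⟨T0, ?_, ?_, ?_⟩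
    · have h := hT0 htJ
      simp only [Set.mem_iUnion] at h
      obtain ⟨x, hxT, -⟩ := h
      exact ⟨x, hxT⟩
    · intro y hy
      exact hT0J y hy
    · intro s hs
      have h := hT0 hs
      simp only [Set.mem_iUnion] at h
      obtain ⟨x, hxT, hxball⟩ := h
      refine ⟨x, hxT, ?_⟩
      have hd := Metric.mem_ball.mp hxball
      rw [Real.dist_eq] at hd
      exact hηp x (hT0J x hxT) s (hJI hs) hd
  -- uniform ℓ¹ bound
  obtain ⟨T1, hT1ne, hT1J, hT1⟩ := cover 1 one_pos
  set M : ℝ := 1 + T1.sup' hT1ne (fun x => ∑' n, ‖α x n‖) with hMdef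
  have hM1 : ∀ s ∈ Set.uIcc t t', (∑' n, ‖α s n‖) ≤ M := by
    intro s hs
    obtain ⟨x, hxT, hx⟩ := hT1 s hs
    have h2 : (∑' n, ‖α x n‖) ≤ T1.sup' hT1ne (fun x => ∑' n, ‖α x n‖) :=
      Finset.le_sup' (fun x => ∑' n, ‖α x n‖) hxT
    have h1 := hNle s hs x (hT1J hxT)
    rw [hMdef]; linarith
  have hMge1 : 1 ≤ M := by
    obtain ⟨x, hxT, -⟩ := hT1 t htJ
    have h2 : (∑' n, ‖α x n‖) ≤ T1.sup' hT1ne (fun x => ∑' n, ‖α x n‖) :=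
      Finset.le_sup' (fun x => ∑' n, ‖α x n‖) hxT
    have := hNnn x
    rw [hMdef]; linarith
  have hM0 : (0:ℝ) ≤ M := by linarith
  -- uniform tails
  have tails : ∀ ε : ℝ, 0 < ε → ∃ Fs : Finset Z2,
      ∀ s ∈ Set.uIcc t t', (∑' n : {m : Z2 // m ∉ Fs}, ‖α s n.1‖) ≤ ε := by
    intro ε hε
    obtain ⟨T, hTne, hTJ, hT⟩ := cover (ε/2) (by positivity)
    have hx : ∀ x : ℝ, x ∈ T → ∃ Fx : Finset Z2, ∀ G : Finset Z2, Fx ⊆ G →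
        (∑' n : {m : Z2 // m ∉ G}, ‖α x n.1‖) < ε/2 := by
      intro x _
      have htd := tendsto_tsum_compl_atTop_zero (fun n : Z2 => ‖α x n‖)
      have hev := (tendsto_order.1 htd).2 (ε/2) (by positivity)
      rw [Filter.eventually_atTop] at hev
      obtain ⟨F0, hF0⟩ := hev
      exact ⟨F0, fun G hG => hF0 G hG⟩
    choose! Fx hFx using hx
    refine ⟨T.biUnion Fx, fun s hs => ?_⟩
    obtain ⟨x, hxT, hxd⟩ := hT s hs
    have hxJ : x ∈ Set.uIcc t t' := hTJ hxT
    have hsub : Fx x ⊆ T.biUnion Fx := Finset.subset_biUnion_of_mem Fx hxT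
    have h1 := hFx x hxT (T.biUnion Fx) hsub
    have hsx : Summable (fun n : {m : Z2 // m ∉ T.biUnion Fx} => ‖α x n.1‖) :=
      (hsum x hxJ).subtype _
    have hss : Summable (fun n : {m : Z2 // m ∉ T.biUnion Fx} => ‖α s n.1‖) :=
      (hsum s hs).subtype _
    have hsd : Summable (fun n : {m : Z2 // m ∉ T.biUnion Fx} => ‖α s n.1 - α x n.1‖) :=
      (hsumd s hs x hxJ).subtype _
    have h2 : (∑' n : {m : Z2 // m ∉ T.biUnion Fx}, ‖α s n.1‖)
        ≤ (∑' n : {m : Z2 // m ∉ T.biUnion Fx}, ‖α x n.1‖)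
          + ∑' n : {m : Z2 // m ∉ T.biUnion Fx}, ‖α s n.1 - α x n.1‖ := by
      rw [← Summable.tsum_add hsx hsd]
      refine Summable.tsum_le_tsum (fun n => ?_) hss (hsx.add hsd)
      have := norm_sub_norm_le (α s n.1) (α x n.1)
      linarith
    have h3 : (∑' n : {m : Z2 // m ∉ T.biUnion Fx}, ‖α s n.1 - α x n.1‖)
        ≤ ∑' n, ‖α s n - α x n‖ :=
      Summable.tsum_subtype_le _ _ (fun n => norm_nonneg _) (hsumd s hs x hxJ)
    linarith
  -- summability of squares
  have hcoord : ∀ s ∈ Set.uIcc t t', ∀ n, ‖α s n‖ ≤ M := by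
    intro s hs n
    refine le_trans (Summable.le_tsum (hsum s hs) n (fun j _ => norm_nonneg _)) (hM1 s hs)
  have hsq : ∀ s ∈ Set.uIcc t t', Summable (fun n : Z2 => ‖α s n‖ ^ 2) := by
    intro s hs
    refine Summable.of_nonneg_of_le (fun n => sq_nonneg _) (fun n => ?_)
      ((hsum s hs).mul_left M)
    calc ‖α s n‖ ^ 2 = ‖α s n‖ * ‖α s n‖ := pow_two (‖α s n‖)
      _ ≤ M * ‖α s n‖ := mul_le_mul_of_nonneg_right (hcoord s hs n) (norm_nonneg _)
  -- the key ε-estimate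
  have key : ∀ ε : ℝ, 0 < ε →
      |(∑' n, ‖α t' n‖ ^ 2) - (∑' n, ‖α t n‖ ^ 2)| ≤ (2*M + 2*M^3*|t' - t|) * ε := by
    intro ε hε
    obtain ⟨Fs, hFs⟩ := tails ε hε
    have hda : ∀ s ∈ Set.uIcc t t', HasDerivAt (fun u => ∑ n ∈ Fs, ‖α u n‖ ^ 2)
        (∑ n ∈ Fs, (-2 * ((starRingEnd ℂ) (α s n) * res0Sum (α s) n).im)) s := by
      intro s hs
      refine HasDerivAt.fun_sum (fun n _ => ?_)
      have h := hasDerivAt_normSq (hode s (hJI hs) n)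
      rw [re_deriv_eq (α s n) (res0Sum (α s) n) (sqz n)] at h
      exact h
    have hDsum : ∀ s ∈ Set.uIcc t t',
        HasSum (fun n => -2 * ((starRingEnd ℂ) (α s n) * res0Sum (α s) n).im) 0 :=
      fun s hs => keyHasSum (hsum s hs)
    have hDle : ∀ s ∈ Set.uIcc t t', ∀ n,
        |(-2 * ((starRingEnd ℂ) (α s n) * res0Sum (α s) n).im)| ≤ 2*M^3 * ‖α s n‖ := by
      intro s hs n
      have h1 : |((starRingEnd ℂ) (α s n) * res0Sum (α s) n).im|
          ≤ ‖α s n‖ * ‖res0Sum (α s) n‖ := by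
        refine le_trans (Complex.abs_im_le_norm _) ?_
        rw [norm_mul, RCLike.norm_conj]
      have h2 : ‖res0Sum (α s) n‖ ≤ M ^ 3 :=
        le_trans (res0Sum_bound (hsum s hs) n) (pow_le_pow_left₀ (hNnn s) (hM1 s hs) 3)
      rw [abs_mul]
      have h3 : |(-2 : ℝ)| = 2 := by norm_num
      rw [h3]
      nlinarith [norm_nonneg (α s n), norm_nonneg (res0Sum (α s) n)]
    have hdb : ∀ s ∈ Set.uIcc t t',
        |∑ n ∈ Fs, (-2 * ((starRingEnd ℂ) (α s n) * res0Sum (α s) n).im)| ≤ 2*M^3*ε := by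
      intro s hs
      have h0 := Summable.sum_add_tsum_subtype_compl ((hDsum s hs).summable) Fs
      rw [(hDsum s hs).tsum_eq] at h0
      have heq : (∑ n ∈ Fs, (-2 * ((starRingEnd ℂ) (α s n) * res0Sum (α s) n).im))
          = -(∑' n : {m : Z2 // m ∉ Fs},
              (-2 * ((starRingEnd ℂ) (α s n.1) * res0Sum (α s) n.1).im)) := by
        linarith
      rw [heq, abs_neg]
      have hsub1 : Summable (fun n : {m : Z2 // m ∉ Fs} => 2*M^3*‖α s n.1‖) :=
        ((hsum s hs).subtype _).mul_left _
      have hsubD : Summable (fun n : {m : Z2 // m ∉ Fs} =>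
          |(-2 * ((starRingEnd ℂ) (α s n.1) * res0Sum (α s) n.1).im)|) :=
        Summable.of_nonneg_of_le (fun _ => abs_nonneg _) (fun n => hDle s hs n.1) hsub1
      have h4 : |∑' n : {m : Z2 // m ∉ Fs},
            (-2 * ((starRingEnd ℂ) (α s n.1) * res0Sum (α s) n.1).im)|
          ≤ ∑' n : {m : Z2 // m ∉ Fs},
            |(-2 * ((starRingEnd ℂ) (α s n.1) * res0Sum (α s) n.1).im)| :=
        norm_tsum_le_tsum_norm (f := fun n : {m : Z2 // m ∉ Fs} =>
            (-2 * ((starRingEnd ℂ) (α s n.1) * res0Sum (α s) n.1).im)) hsubD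
      have h5 : (∑' n : {m : Z2 // m ∉ Fs},
            |(-2 * ((starRingEnd ℂ) (α s n.1) * res0Sum (α s) n.1).im)|)
          ≤ ∑' n : {m : Z2 // m ∉ Fs}, 2*M^3*‖α s n.1‖ :=
        Summable.tsum_le_tsum (fun n => hDle s hs n.1) hsubD hsub1
      have h6 : (∑' n : {m : Z2 // m ∉ Fs}, 2*M^3*‖α s n.1‖)
          = 2*M^3 * ∑' n : {m : Z2 // m ∉ Fs}, ‖α s n.1‖ := tsum_mul_left
      have h7 : 2*M^3 * (∑' n : {m : Z2 // m ∉ Fs}, ‖α s n.1‖) ≤ 2*M^3 * ε := by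
        have hM3 : (0:ℝ) ≤ 2*M^3 := by positivity
        exact mul_le_mul_of_nonneg_left (hFs s hs) hM3
      linarith
    have hmvt := Convex.norm_image_sub_le_of_norm_hasDerivWithin_le
      (f := fun u => ∑ n ∈ Fs, ‖α u n‖ ^ 2)
      (f' := fun s => ∑ n ∈ Fs, (-2 * ((starRingEnd ℂ) (α s n) * res0Sum (α s) n).im))
      (fun s hs => (hda s hs).hasDerivWithinAt)
      (fun s hs => hdb s hs)
      (convex_uIcc t t') htJ ht'J
    have hmvt' : |(∑ n ∈ Fs, ‖α t' n‖ ^ 2) - ∑ n ∈ Fs, ‖α t n‖ ^ 2|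
        ≤ 2*M^3*ε * |t' - t| := hmvt
    have hE : ∀ s ∈ Set.uIcc t t',
        |(∑' n, ‖α s n‖ ^ 2) - ∑ n ∈ Fs, ‖α s n‖ ^ 2| ≤ M * ε := by
      intro s hs
      have h0 := Summable.sum_add_tsum_subtype_compl (hsq s hs) Fs
      have heq : (∑' n, ‖α s n‖ ^ 2) - (∑ n ∈ Fs, ‖α s n‖ ^ 2)
          = ∑' n : {m : Z2 // m ∉ Fs}, ‖α s n.1‖ ^ 2 := by linarith
      rw [heq, _root_.abs_of_nonneg (tsum_nonneg fun n => sq_nonneg _)]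
      have hb : ∀ n : {m : Z2 // m ∉ Fs}, ‖α s n.1‖ ^ 2 ≤ M * ‖α s n.1‖ := by
        intro n
        calc ‖α s n.1‖ ^ 2 = ‖α s n.1‖ * ‖α s n.1‖ := pow_two (‖α s n.1‖)
          _ ≤ M * ‖α s n.1‖ := mul_le_mul_of_nonneg_right (hcoord s hs n.1) (norm_nonneg _)
      calc (∑' n : {m : Z2 // m ∉ Fs}, ‖α s n.1‖ ^ 2)
          ≤ ∑' n : {m : Z2 // m ∉ Fs}, M * ‖α s n.1‖ :=
            Summable.tsum_le_tsum hb ((hsq s hs).subtype _) (((hsum s hs).subtype _).mul_left M)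
        _ = M * ∑' n : {m : Z2 // m ∉ Fs}, ‖α s n.1‖ := tsum_mul_left
        _ ≤ M * ε := mul_le_mul_of_nonneg_left (hFs s hs) hM0
    have e1 := hE t htJ
    have e2 := hE t' ht'J
    have tri1 : |(∑' n, ‖α t' n‖ ^ 2) - (∑' n, ‖α t n‖ ^ 2)|
        ≤ |(∑' n, ‖α t' n‖ ^ 2) - ∑ n ∈ Fs, ‖α t' n‖ ^ 2|
          + |(∑ n ∈ Fs, ‖α t' n‖ ^ 2) - ∑ n ∈ Fs, ‖α t n‖ ^ 2|
          + |(∑ n ∈ Fs, ‖α t n‖ ^ 2) - ∑' n, ‖α t n‖ ^ 2| := by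
      have g1 := abs_sub_le ((∑' n, ‖α t' n‖ ^ 2)) (∑ n ∈ Fs, ‖α t' n‖ ^ 2)
        ((∑' n, ‖α t n‖ ^ 2))
      have g2 := abs_sub_le ((∑ n ∈ Fs, ‖α t' n‖ ^ 2)) (∑ n ∈ Fs, ‖α t n‖ ^ 2)
        ((∑' n, ‖α t n‖ ^ 2))
      linarith
    have e2' : |(∑ n ∈ Fs, ‖α t n‖ ^ 2) - ∑' n, ‖α t n‖ ^ 2| ≤ M * ε := by
      rw [abs_sub_comm]; exact e1
    have hmb : 2*M^3*ε * |t' - t| ≤ 2*M^3*|t' - t| * ε := by ring_nf; exact le_refl _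
    nlinarith [hmvt', e2, e2', tri1]
  -- conclude
  have hK : (0:ℝ) < 2*M + 2*M^3*|t' - t| := by
    have h1 : (0:ℝ) ≤ 2*M^3*|t' - t| := by positivity
    linarith
  by_contra hne
  have habs0 : 0 < |(∑' n, ‖α t' n‖ ^ 2) - ∑' n, ‖α t n‖ ^ 2| := by
    rw [abs_pos, sub_ne_zero]
    exact fun h => hne h.symm
  set c : ℝ := |(∑' n, ‖α t' n‖ ^ 2) - ∑' n, ‖α t n‖ ^ 2| with hc
  set K : ℝ := 2*M + 2*M^3*|t' - t| with hKdef
  have hkey := key (c / (2*K)) (by positivity)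
  have heq : K * (c / (2*K)) = c / 2 := by
    field_simp
  rw [heq] at hkey
  linarith

end
end
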